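/- The full simply-typed lambda-calculus λ(→,∧,∨,⊥) is strongly normalizing with respect to the union of β-reductions and commutative reductions. -/

import Mathlib

/-! Types of the full simply-typed lambda-calculus λ(→,∧,∨,⊥). -/
inductive Ty : Type
  | base : ℕ → Ty
  | bot  : Ty
  | arr  : Ty → Ty → Ty
  | and  : Ty → Ty → Ty
  | or   : Ty → Ty → Ty
  deriving DecidableEq

/-- Church-style terms of λ(→,∧,∨,⊥), de Bruijn indices for variables. -/
inductive Tm : Type
  | var   : ℕ → Tm
  | lam   : Ty → Tm → Tm
  | app   : Tm → Tm → Tm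
  | pair  : Tm → Tm → Tm
  | inl   : Ty → Ty → Tm → Tm            -- (in₁ A)^(σ∨τ)
  | inr   : Ty → Ty → Tm → Tm
  | proj1 : Tm → Ty → Ty → Tm            -- P^(σ∧τ) π₁
  | proj2 : Tm → Ty → Ty → Tm
  | case  : Tm → Ty → Ty → Tm → Tm → Ty → Tm  -- W^(σ∨τ)[x.S,y.T]^δ
  | eps   : Tm → Ty → Tm                 -- A^⊥ ε_σ
  deriving DecidableEq

namespace Tm

/-- Shift the free variables `≥ c` of a term by `d`. -/
def shift (c d : ℕ) : Tm → Tm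
  | var n => if n < c then var n else var (n + d)
  | lam σ t => lam σ (shift (c + 1) d t)
  | app s t => app (shift c d s) (shift c d t)
  | pair s t => pair (shift c d s) (shift c d t)
  | inl σ τ t => inl σ τ (shift c d t)
  | inr σ τ t => inr σ τ (shift c d t)
  | proj1 t σ τ => proj1 (shift c d t) σ τ
  | proj2 t σ τ => proj2 (shift c d t) σ τ
  | case w σ τ s t δ => case (shift c d w) σ τ (shift (c + 1) d s) (shift (c + 1) d t) δ
  | eps t σ => eps (shift c d t) σ

/-- Capture-avoiding substitution of `s` for variable `n`. -/
def subst : Tm → ℕ → Tm → Tm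
  | var m, n, s => if m = n then s else if n < m then var (m - 1) else var m
  | lam σ t, n, s => lam σ (subst t (n + 1) (shift 0 1 s))
  | app a b, n, s => app (subst a n s) (subst b n s)
  | pair a b, n, s => pair (subst a n s) (subst b n s)
  | inl σ τ t, n, s => inl σ τ (subst t n s)
  | inr σ τ t, n, s => inr σ τ (subst t n s)
  | proj1 t σ τ, n, s => proj1 (subst t n s) σ τ
  | proj2 t σ τ, n, s => proj2 (subst t n s) σ τ
  | case w σ τ a b δ, n, s =>
      case (subst w n s) σ τ (subst a (n + 1) (shift 0 1 s)) (subst b (n + 1) (shift 0 1 s)) δ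
  | eps t σ, n, s => eps (subst t n s) σ

end Tm

/-- Typing judgment of λ(→,∧,∨,⊥). -/
inductive HasTy : List Ty → Tm → Ty → Prop
  | var {Γ n τ} : Γ[n]? = some τ → HasTy Γ (.var n) τ
  | lam {Γ σ τ t} : HasTy (σ :: Γ) t τ → HasTy Γ (.lam σ t) (.arr σ τ)
  | app {Γ σ τ s t} : HasTy Γ s (.arr σ τ) → HasTy Γ t σ → HasTy Γ (.app s t) τ
  | pair {Γ σ τ s t} : HasTy Γ s σ → HasTy Γ t τ → HasTy Γ (.pair s t) (.and σ τ)
  | inl {Γ σ τ t} : HasTy Γ t σ → HasTy Γ (.inl σ τ t) (.or σ τ)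
  | inr {Γ σ τ t} : HasTy Γ t τ → HasTy Γ (.inr σ τ t) (.or σ τ)
  | proj1 {Γ σ τ t} : HasTy Γ t (.and σ τ) → HasTy Γ (.proj1 t σ τ) σ
  | proj2 {Γ σ τ t} : HasTy Γ t (.and σ τ) → HasTy Γ (.proj2 t σ τ) τ
  | case {Γ σ τ δ w s t} : HasTy Γ w (.or σ τ) → HasTy (σ :: Γ) s δ → HasTy (τ :: Γ) t δ →
      HasTy Γ (.case w σ τ s t δ) δ
  | eps {Γ σ t} : HasTy Γ t .bot → HasTy Γ (.eps t σ) σ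

/-- Compatible (congruence) closure of a root relation on terms. -/
inductive Compat (R : Tm → Tm → Prop) : Tm → Tm → Prop
  | root {a b} : R a b → Compat R a b
  | lam {σ a b} : Compat R a b → Compat R (.lam σ a) (.lam σ b)
  | appL {a b t} : Compat R a b → Compat R (.app a t) (.app b t)
  | appR {a b t} : Compat R a b → Compat R (.app t a) (.app t b)
  | pairL {a b t} : Compat R a b → Compat R (.pair a t) (.pair b t)
  | pairR {a b t} : Compat R a b → Compat R (.pair t a) (.pair t b)
  | inl {σ τ a b} : Compat R a b → Compat R (.inl σ τ a) (.inl σ τ b)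
  | inr {σ τ a b} : Compat R a b → Compat R (.inr σ τ a) (.inr σ τ b)
  | proj1 {σ τ a b} : Compat R a b → Compat R (.proj1 a σ τ) (.proj1 b σ τ)
  | proj2 {σ τ a b} : Compat R a b → Compat R (.proj2 a σ τ) (.proj2 b σ τ)
  | caseW {σ τ δ a b s t} : Compat R a b → Compat R (.case a σ τ s t δ) (.case b σ τ s t δ)
  | caseS {σ τ δ w a b t} : Compat R a b → Compat R (.case w σ τ a t δ) (.case w σ τ b t δ)
  | caseT {σ τ δ w s a b} : Compat R a b → Compat R (.case w σ τ s a δ) (.case w σ τ s b δ)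
  | eps {σ a b} : Compat R a b → Compat R (.eps a σ) (.eps b σ)

/-- Root β-reductions of λ(→,∧,∨,⊥). -/
inductive BetaRoot : Tm → Tm → Prop
  | beta {σ m a} : BetaRoot (.app (.lam σ m) a) (m.subst 0 a)
  | pi1 {m n σ τ} : BetaRoot (.proj1 (.pair m n) σ τ) m
  | pi2 {m n σ τ} : BetaRoot (.proj2 (.pair m n) σ τ) n
  | inl {σ τ δ a s t} : BetaRoot (.case (.inl σ τ a) σ τ s t δ) (s.subst 0 a)
  | inr {σ τ δ b s t} : BetaRoot (.case (.inr σ τ b) σ τ s t δ) (t.subst 0 b)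

/-- Root commutative (permutative) reductions of λ(→,∧,∨,⊥). -/
inductive CommRoot : Tm → Tm → Prop
  | epsApp {a σ τ n} : CommRoot (.app (.eps a (.arr σ τ)) n) (.eps a τ)
  | epsPi1 {a σ τ} : CommRoot (.proj1 (.eps a (.and σ τ)) σ τ) (.eps a σ)
  | epsPi2 {a σ τ} : CommRoot (.proj2 (.eps a (.and σ τ)) σ τ) (.eps a τ)
  | epsCase {a σ τ δ s t} : CommRoot (.case (.eps a (.or σ τ)) σ τ s t δ) (.eps a δ)
  | epsEps {a σ} : CommRoot (.eps (.eps a .bot) σ) (.eps a σ)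
  | caseApp {w σ τ α β s t n} :
      CommRoot (.app (.case w σ τ s t (.arr α β)) n)
        (.case w σ τ (.app s (n.shift 0 1)) (.app t (n.shift 0 1)) β)
  | casePi1 {w σ τ α β s t} :
      CommRoot (.proj1 (.case w σ τ s t (.and α β)) α β)
        (.case w σ τ (.proj1 s α β) (.proj1 t α β) α)
  | casePi2 {w σ τ α β s t} :
      CommRoot (.proj2 (.case w σ τ s t (.and α β)) α β)
        (.case w σ τ (.proj2 s α β) (.proj2 t α β) β)
  | caseCase {w σ τ α β δ s t a b} :
      CommRoot (.case (.case w σ τ s t (.or α β)) α β a b δ)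
        (.case w σ τ (.case s α β (a.shift 1 1) (b.shift 1 1) δ)
          (.case t α β (a.shift 1 1) (b.shift 1 1) δ) δ)
  | caseEps {w σ τ s t α} :
      CommRoot (.eps (.case w σ τ s t .bot) α)
        (.case w σ τ (.eps s α) (.eps t α) α)

/-- One step of β-reduction anywhere in a term. -/
def Beta : Tm → Tm → Prop := Compat BetaRoot

/-- One step of commutative (permutative) reduction anywhere in a term. -/
def Comm : Tm → Tm → Prop := Compat CommRoot

/-! ## The target calculus λ→ -/

/-- Types of λ→: a single base type ⊥ and function types. -/
inductive Ty1 : Type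
  | bot : Ty1
  | arr : Ty1 → Ty1 → Ty1
  deriving DecidableEq

/-- (Curry-style) terms of λ→, de Bruijn indices. -/
inductive Tm1 : Type
  | var : ℕ → Tm1
  | lam : Tm1 → Tm1
  | app : Tm1 → Tm1 → Tm1
  deriving DecidableEq

namespace Tm1

def shift (c d : ℕ) : Tm1 → Tm1
  | var n => if n < c then var n else var (n + d)
  | lam t => lam (shift (c + 1) d t)
  | app s t => app (shift c d s) (shift c d t)

def subst : Tm1 → ℕ → Tm1 → Tm1
  | var m, n, s => if m = n then s else if n < m then var (m - 1) else var m
  | lam t, n, s => lam (subst t (n + 1) (shift 0 1 s))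
  | app a b, n, s => app (subst a n s) (subst b n s)

end Tm1

/-- Typing in λ→. -/
inductive HasTy1 : List Ty1 → Tm1 → Ty1 → Prop
  | var {Γ n τ} : Γ[n]? = some τ → HasTy1 Γ (.var n) τ
  | lam {Γ σ τ t} : HasTy1 (σ :: Γ) t τ → HasTy1 Γ (.lam t) (.arr σ τ)
  | app {Γ σ τ s t} : HasTy1 Γ s (.arr σ τ) → HasTy1 Γ t σ → HasTy1 Γ (.app s t) τ

/-- One step of βη-reduction in λ→. -/
inductive Step1 : Tm1 → Tm1 → Prop
  | beta {t s} : Step1 (.app (.lam t) s) (t.subst 0 s)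
  | eta {t} : Step1 (.lam (.app (t.shift 0 1) (.var 0))) t
  | lam {a b} : Step1 a b → Step1 (.lam a) (.lam b)
  | appL {a b t} : Step1 a b → Step1 (.app a t) (.app b t)
  | appR {a b t} : Step1 a b → Step1 (.app t a) (.app t b)

/-- One step of η-reduction in λ→. -/
inductive EtaStep : Tm1 → Tm1 → Prop
  | eta {t} : EtaStep (.lam (.app (t.shift 0 1) (.var 0))) t
  | lam {a b} : EtaStep a b → EtaStep (.lam a) (.lam b)
  | appL {a b t} : EtaStep a b → EtaStep (.app a t) (.app b t)
  | appR {a b t} : EtaStep a b → EtaStep (.app t a) (.app t b)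

/-! ## The translation -/

/-- Translation of types: all type constants (including ⊥) go to ⊥. -/
def trTy : Ty → Ty1
  | .base _ => .bot
  | .bot => .bot
  | .arr σ τ => .arr (trTy σ) (trTy τ)
  | .and σ τ => .arr (.arr (trTy σ) (.arr (trTy τ) .bot)) .bot
  | .or σ τ => .arr (.arr (trTy σ) .bot) (.arr (.arr (trTy τ) .bot) .bot)

/-- The argument list of a λ→ type: `args (σ₁→…→σₙ→⊥) = [σ₁,…,σₙ]`. -/
def args : Ty1 → List Ty1
  | .bot => []
  | .arr a b => a :: args b

/-- `absN n t = λx₁…xₙ. t`. -/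
def absN : ℕ → Tm1 → Tm1
  | 0, t => t
  | n + 1, t => .lam (absN n t)

/-- Iterated application. -/
def mkApps : Tm1 → List Tm1 → Tm1 := List.foldl .app

/-- The translation of terms of λ(→,∧,∨,⊥) into λ→. -/
def trTm : Tm → Tm1
  | .var n => .var n
  | .lam _ t => .lam (trTm t)
  | .app s t => .app (trTm s) (trTm t)
  | .pair s t => .lam (.app (.app (.var 0) ((trTm s).shift 0 1)) ((trTm t).shift 0 1))
  | .inl _ _ t => .lam (.lam (.app (.var 1) ((trTm t).shift 0 2)))
  | .inr _ _ t => .lam (.lam (.app (.var 0) ((trTm t).shift 0 2)))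
  | .proj1 p σ _ =>
      let n := (args (trTy σ)).length
      absN n (.app ((trTm p).shift 0 n)
        (.lam (.lam (mkApps (.var 1) ((List.range n).map fun i => .var (n + 1 - i))))))
  | .proj2 p _ τ =>
      let m := (args (trTy τ)).length
      absN m (.app ((trTm p).shift 0 m)
        (.lam (.lam (mkApps (.var 0) ((List.range m).map fun i => .var (m + 1 - i))))))
  | .case w _ _ s t δ =>
      let k := (args (trTy δ)).length
      absN k (.app (.app ((trTm w).shift 0 k)
          (.lam (mkApps ((trTm s).shift 1 k) ((List.range k).map fun i => .var (k - i)))))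
        (.lam (mkApps ((trTm t).shift 1 k) ((List.range k).map fun i => .var (k - i)))))
  | .eps a σ =>
      let n := (args (trTy σ)).length
      absN (n - 1) ((trTm a).shift 0 (n - 1))

namespace Tm

/-! ### de Bruijn toolkit -/

@[simp] theorem shift_zero (t : Tm) : ∀ c, shift c 0 t = t := by
  induction t <;> intro c <;> simp [shift, *]

theorem shift_shift_comm (t : Tm) : ∀ c c' d d' e, c' ≤ c → e = c + d' →
    shift c' d' (shift c d t) = shift e d (shift c' d' t) := by
  induction t <;> intro c c' d d' e h he <;> subst he <;>
    simp only [shift]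
  case var n =>
    split_ifs <;> simp only [shift] <;> split_ifs <;>
      first | rfl | (congr 1; omega) | omega
  case lam σ t ih => rw [ih (c+1) (c'+1) d d' (c+d'+1) (by omega) (by omega)]
  case app a b iha ihb => rw [iha _ _ _ _ _ h rfl, ihb _ _ _ _ _ h rfl]
  case pair a b iha ihb => rw [iha _ _ _ _ _ h rfl, ihb _ _ _ _ _ h rfl]
  case inl _ _ a iha => rw [iha _ _ _ _ _ h rfl]
  case inr _ _ a iha => rw [iha _ _ _ _ _ h rfl]
  case proj1 a _ _ iha => rw [iha _ _ _ _ _ h rfl]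
  case proj2 a _ _ iha => rw [iha _ _ _ _ _ h rfl]
  case case w σ τ s t δ ihw ihs iht =>
    rw [ihw _ _ _ _ _ h rfl, ihs (c+1) (c'+1) d d' (c+d'+1) (by omega) (by omega),
       iht (c+1) (c'+1) d d' (c+d'+1) (by omega) (by omega)]
  case eps a _ iha => rw [iha _ _ _ _ _ h rfl]

theorem shift_shift_merge (t : Tm) : ∀ c c' d d' e, c' ≤ c → c ≤ c' + d' → e = d' + d →
    shift c d (shift c' d' t) = shift c' e t := by
  induction t <;> intro c c' d d' e h1 h2 he <;> subst he <;>
    simp only [shift]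
  case var n =>
    split_ifs <;> simp only [shift] <;> split_ifs <;>
      first | rfl | (congr 1; omega) | omega
  case lam σ t ih => rw [ih (c+1) (c'+1) d d' _ (by omega) (by omega) rfl]
  case app a b iha ihb => rw [iha _ _ _ _ _ h1 h2 rfl, ihb _ _ _ _ _ h1 h2 rfl]
  case pair a b iha ihb => rw [iha _ _ _ _ _ h1 h2 rfl, ihb _ _ _ _ _ h1 h2 rfl]
  case inl _ _ a iha => rw [iha _ _ _ _ _ h1 h2 rfl]
  case inr _ _ a iha => rw [iha _ _ _ _ _ h1 h2 rfl]
  case proj1 a _ _ iha => rw [iha _ _ _ _ _ h1 h2 rfl]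
  case proj2 a _ _ iha => rw [iha _ _ _ _ _ h1 h2 rfl]
  case case w σ τ s t δ ihw ihs iht =>
    rw [ihw _ _ _ _ _ h1 h2 rfl, ihs (c+1) (c'+1) d d' _ (by omega) (by omega) rfl,
       iht (c+1) (c'+1) d d' _ (by omega) (by omega) rfl]
  case eps a _ iha => rw [iha _ _ _ _ _ h1 h2 rfl]

theorem subst_shift_cancel (t : Tm) : ∀ s c d j e, c ≤ j → j < c + d → e = d - 1 →
    subst (shift c d t) j s = shift c e t := by
  induction t <;> intro s c d j e h1 h2 he <;> subst he <;>
    simp only [shift, subst]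
  case var n =>
    split_ifs <;> simp only [subst] <;> split_ifs <;>
      first | rfl | (congr 1; omega) | omega
  case lam σ t ih => rw [ih _ (c+1) d (j+1) _ (by omega) (by omega) rfl]
  case app a b iha ihb => rw [iha _ _ _ _ _ h1 h2 rfl, ihb _ _ _ _ _ h1 h2 rfl]
  case pair a b iha ihb => rw [iha _ _ _ _ _ h1 h2 rfl, ihb _ _ _ _ _ h1 h2 rfl]
  case inl _ _ a iha => rw [iha _ _ _ _ _ h1 h2 rfl]
  case inr _ _ a iha => rw [iha _ _ _ _ _ h1 h2 rfl]
  case proj1 a _ _ iha => rw [iha _ _ _ _ _ h1 h2 rfl]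
  case proj2 a _ _ iha => rw [iha _ _ _ _ _ h1 h2 rfl]
  case case w σ τ s' t' δ ihw ihs iht =>
    rw [ihw _ _ _ _ _ h1 h2 rfl, ihs _ (c+1) d (j+1) _ (by omega) (by omega) rfl,
       iht _ (c+1) d (j+1) _ (by omega) (by omega) rfl]
  case eps a _ iha => rw [iha _ _ _ _ _ h1 h2 rfl]

theorem shift_subst_hi (t : Tm) : ∀ u c d j e, c ≤ j → e = j + d →
    shift c d (subst t j u) = subst (shift c d t) e (shift c d u) := by
  induction t <;> intro u c d j e h he <;> subst he <;>
    simp only [shift, subst]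
  case var n =>
    split_ifs <;> simp only [shift, subst] <;> split_ifs <;>
      first | rfl | (congr 1; omega) | omega
  case lam σ t ih =>
    rw [ih _ (c+1) d (j+1) (j+d+1) (by omega) (by omega),
      shift_shift_comm u c 0 d 1 (c+1) (by omega) (by omega)]
  case app a b iha ihb => rw [iha _ _ _ _ _ h rfl, ihb _ _ _ _ _ h rfl]
  case pair a b iha ihb => rw [iha _ _ _ _ _ h rfl, ihb _ _ _ _ _ h rfl]
  case inl _ _ a iha => rw [iha _ _ _ _ _ h rfl]
  case inr _ _ a iha => rw [iha _ _ _ _ _ h rfl]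
  case proj1 a _ _ iha => rw [iha _ _ _ _ _ h rfl]
  case proj2 a _ _ iha => rw [iha _ _ _ _ _ h rfl]
  case case w σ τ s' t' δ ihw ihs iht =>
    rw [ihw _ _ _ _ _ h rfl, ihs _ (c+1) d (j+1) (j+d+1) (by omega) (by omega),
       iht _ (c+1) d (j+1) (j+d+1) (by omega) (by omega),
      shift_shift_comm u c 0 d 1 (c+1) (by omega) (by omega)]
  case eps a _ iha => rw [iha _ _ _ _ _ h rfl]

theorem shift_subst_lo (t : Tm) : ∀ u c d j, j ≤ c →
    shift c d (subst t j u) = subst (shift (c + 1) d t) j (shift c d u) := by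
  induction t <;> intro u c d j h <;>
    simp only [shift, subst]
  case var n =>
    split_ifs <;> simp only [shift, subst] <;> split_ifs <;>
      first | rfl | (congr 1; omega) | omega
  case lam σ t ih =>
    rw [ih _ (c+1) d (j+1) (by omega),
      shift_shift_comm u c 0 d 1 (c+1) (by omega) (by omega)]
  case app a b iha ihb => rw [iha _ _ _ _ h, ihb _ _ _ _ h]
  case pair a b iha ihb => rw [iha _ _ _ _ h, ihb _ _ _ _ h]
  case inl _ _ a iha => rw [iha _ _ _ _ h]
  case inr _ _ a iha => rw [iha _ _ _ _ h]
  case proj1 a _ _ iha => rw [iha _ _ _ _ h]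
  case proj2 a _ _ iha => rw [iha _ _ _ _ h]
  case case w σ τ s' t' δ ihw ihs iht =>
    rw [ihw _ _ _ _ h, ihs _ (c+1) d (j+1) (by omega), iht _ (c+1) d (j+1) (by omega),
      shift_shift_comm u c 0 d 1 (c+1) (by omega) (by omega)]
  case eps a _ iha => rw [iha _ _ _ _ h]

theorem subst_subst (t : Tm) : ∀ u s i j, i ≤ j →
    subst (subst t i u) j s = subst (subst t (j + 1) (shift i 1 s)) i (subst u j s) := by
  induction t <;> intro u s i j h <;>
    simp only [subst]
  case var n =>
    rcases eq_or_ne n (j+1) with rfl | hnj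
    · have h1 : ¬ (j + 1 = i) := by omega
      have h2 : i < j + 1 := by omega
      simp [h1, h2, subst, subst_shift_cancel s _ i 1 i 0 le_rfl (by omega) rfl, shift_zero]
    · split_ifs <;> simp only [subst] <;> split_ifs <;>
        first | rfl | (congr 1; omega) | omega
  case lam σ t ih =>
    rw [ih _ _ (i+1) (j+1) (by omega),
      shift_shift_comm s i 0 1 1 (i+1) (by omega) (by omega),
      shift_subst_hi u s 0 1 j (j+1) (by omega) (by omega)]
  case app a b iha ihb => rw [iha _ _ _ _ h, ihb _ _ _ _ h]
  case pair a b iha ihb => rw [iha _ _ _ _ h, ihb _ _ _ _ h]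
  case inl _ _ a iha => rw [iha _ _ _ _ h]
  case inr _ _ a iha => rw [iha _ _ _ _ h]
  case proj1 a _ _ iha => rw [iha _ _ _ _ h]
  case proj2 a _ _ iha => rw [iha _ _ _ _ h]
  case case w σ τ s' t' δ ihw ihs iht =>
    rw [ihw _ _ _ _ h, ihs _ _ (i+1) (j+1) (by omega), iht _ _ (i+1) (j+1) (by omega),
      shift_shift_comm s i 0 1 1 (i+1) (by omega) (by omega),
      shift_subst_hi u s 0 1 j (j+1) (by omega) (by omega)]
  case eps a _ iha => rw [iha _ _ _ _ h]

end Tm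
/-! ### The combined step relation -/

/-- Root reductions: β or commutative. -/
def Root (a b : Tm) : Prop := BetaRoot a b ∨ CommRoot a b

/-- Combined one-step reduction. -/
def Step : Tm → Tm → Prop := Compat Root

theorem compat_mono {R S : Tm → Tm → Prop} (h : ∀ a b, R a b → S a b) :
    ∀ {a b}, Compat R a b → Compat S a b := by
  intro a b hc
  induction hc with
  | root hr => exact .root (h _ _ hr)
  | lam _ ih => exact .lam ih
  | appL _ ih => exact .appL ih
  | appR _ ih => exact .appR ih
  | pairL _ ih => exact .pairL ih
  | pairR _ ih => exact .pairR ih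
  | inl _ ih => exact .inl ih
  | inr _ ih => exact .inr ih
  | proj1 _ ih => exact .proj1 ih
  | proj2 _ ih => exact .proj2 ih
  | caseW _ ih => exact .caseW ih
  | caseS _ ih => exact .caseS ih
  | caseT _ ih => exact .caseT ih
  | eps _ ih => exact .eps ih

theorem step_iff_beta_or_comm {a b : Tm} : Step a b ↔ (Beta a b ∨ Comm a b) := by
  constructor
  · intro h
    induction h with
    | root hr => exact hr.imp .root .root
    | lam _ ih => exact ih.imp .lam .lam
    | appL _ ih => exact ih.imp .appL .appL
    | appR _ ih => exact ih.imp .appR .appR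
    | pairL _ ih => exact ih.imp .pairL .pairL
    | pairR _ ih => exact ih.imp .pairR .pairR
    | inl _ ih => exact ih.imp .inl .inl
    | inr _ ih => exact ih.imp .inr .inr
    | proj1 _ ih => exact ih.imp .proj1 .proj1
    | proj2 _ ih => exact ih.imp .proj2 .proj2
    | caseW _ ih => exact ih.imp .caseW .caseW
    | caseS _ ih => exact ih.imp .caseS .caseS
    | caseT _ ih => exact ih.imp .caseT .caseT
    | eps _ ih => exact ih.imp .eps .eps
  · rintro (h | h)
    · exact compat_mono (fun a b r => Or.inl r) h
    · exact compat_mono (fun a b r => Or.inr r) h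

namespace Tm

open Relation

theorem root_shift {a b : Tm} (c d : ℕ) (h : Root a b) :
    Root (shift c d a) (shift c d b) := by
  rcases h with h | h
  · cases h with
    | @beta σ m x =>
      left
      simp only [shift]
      have : shift c d (m.subst 0 x) = (shift (c+1) d m).subst 0 (shift c d x) :=
        shift_subst_lo m x c d 0 (by omega)
      rw [this]
      exact BetaRoot.beta
    | pi1 => left; simp only [shift]; exact BetaRoot.pi1
    | pi2 => left; simp only [shift]; exact BetaRoot.pi2
    | @inl σ τ δ x s t =>
      left
      simp only [shift]
      rw [shift_subst_lo s x c d 0 (by omega)]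
      exact BetaRoot.inl
    | @inr σ τ δ x s t =>
      left
      simp only [shift]
      rw [shift_subst_lo t x c d 0 (by omega)]
      exact BetaRoot.inr
  · cases h with
    | epsApp => right; simp only [shift]; exact CommRoot.epsApp
    | epsPi1 => right; simp only [shift]; exact CommRoot.epsPi1
    | epsPi2 => right; simp only [shift]; exact CommRoot.epsPi2
    | epsCase => right; simp only [shift]; exact CommRoot.epsCase
    | epsEps => right; simp only [shift]; exact CommRoot.epsEps
    | @caseApp w σ τ α β s t n =>
      right
      simp only [shift]
      rw [show shift (c+1) d (shift 0 1 n) = shift 0 1 (shift c d n) from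
        (shift_shift_comm n c 0 d 1 (c+1) (by omega) (by omega)).symm]
      exact CommRoot.caseApp
    | casePi1 => right; simp only [shift]; exact CommRoot.casePi1
    | casePi2 => right; simp only [shift]; exact CommRoot.casePi2
    | @caseCase w σ τ α β δ s t x y =>
      right
      simp only [shift]
      rw [show shift (c+2) d (shift 1 1 x) = shift 1 1 (shift (c+1) d x) from
        (shift_shift_comm x (c+1) 1 d 1 (c+2) (by omega) (by omega)).symm]
      rw [show shift (c+2) d (shift 1 1 y) = shift 1 1 (shift (c+1) d y) from
        (shift_shift_comm y (c+1) 1 d 1 (c+2) (by omega) (by omega)).symm]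
      exact CommRoot.caseCase
    | caseEps => right; simp only [shift]; exact CommRoot.caseEps

theorem step_shift {a b : Tm} (h : Step a b) : ∀ c d, Step (shift c d a) (shift c d b) := by
  induction h with
  | root hr => intro c d; exact .root (root_shift c d hr)
  | lam _ ih => intro c d; exact .lam (ih (c+1) d)
  | appL _ ih => intro c d; exact .appL (ih c d)
  | appR _ ih => intro c d; exact .appR (ih c d)
  | pairL _ ih => intro c d; exact .pairL (ih c d)
  | pairR _ ih => intro c d; exact .pairR (ih c d)
  | inl _ ih => intro c d; exact .inl (ih c d)
  | inr _ ih => intro c d; exact .inr (ih c d)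
  | proj1 _ ih => intro c d; exact .proj1 (ih c d)
  | proj2 _ ih => intro c d; exact .proj2 (ih c d)
  | caseW _ ih => intro c d; exact .caseW (ih c d)
  | caseS _ ih => intro c d; exact .caseS (ih (c+1) d)
  | caseT _ ih => intro c d; exact .caseT (ih (c+1) d)
  | eps _ ih => intro c d; exact .eps (ih c d)

theorem root_subst {a b : Tm} (n : ℕ) (s : Tm) (h : Root a b) :
    Root (subst a n s) (subst b n s) := by
  rcases h with h | h
  · cases h with
    | @beta σ m x =>
      left
      simp only [subst]
      rw [subst_subst m x s 0 n (by omega)]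
      exact BetaRoot.beta
    | pi1 => left; simp only [subst]; exact BetaRoot.pi1
    | pi2 => left; simp only [subst]; exact BetaRoot.pi2
    | @inl σ τ δ x bs bt =>
      left
      simp only [subst]
      rw [subst_subst bs x s 0 n (by omega)]
      exact BetaRoot.inl
    | @inr σ τ δ x bs bt =>
      left
      simp only [subst]
      rw [subst_subst bt x s 0 n (by omega)]
      exact BetaRoot.inr
  · cases h with
    | epsApp => right; simp only [subst]; exact CommRoot.epsApp
    | epsPi1 => right; simp only [subst]; exact CommRoot.epsPi1
    | epsPi2 => right; simp only [subst]; exact CommRoot.epsPi2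
    | epsCase => right; simp only [subst]; exact CommRoot.epsCase
    | epsEps => right; simp only [subst]; exact CommRoot.epsEps
    | @caseApp w σ τ α β bs bt u =>
      right
      simp only [subst]
      rw [show (shift 0 1 u).subst (n+1) (shift 0 1 s) = shift 0 1 (u.subst n s) from
        (shift_subst_hi u s 0 1 n (n+1) (by omega) (by omega)).symm]
      exact CommRoot.caseApp
    | casePi1 => right; simp only [subst]; exact CommRoot.casePi1
    | casePi2 => right; simp only [subst]; exact CommRoot.casePi2
    | @caseCase w σ τ α β δ bs bt x y =>
      right
      simp only [subst]
      rw [show (shift 1 1 x).subst (n+2) (shift 0 1 (shift 0 1 s))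
            = shift 1 1 (x.subst (n+1) (shift 0 1 s)) by
        rw [shift_subst_hi x (shift 0 1 s) 1 1 (n+1) (n+2) (by omega) (by omega)]
        congr 1
        rw [shift_shift_merge s 1 0 1 1 2 (by omega) (by omega) rfl,
            shift_shift_merge s 0 0 1 1 2 (by omega) (by omega) rfl]]
      rw [show (shift 1 1 y).subst (n+2) (shift 0 1 (shift 0 1 s))
            = shift 1 1 (y.subst (n+1) (shift 0 1 s)) by
        rw [shift_subst_hi y (shift 0 1 s) 1 1 (n+1) (n+2) (by omega) (by omega)]
        congr 1
        rw [shift_shift_merge s 1 0 1 1 2 (by omega) (by omega) rfl,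
            shift_shift_merge s 0 0 1 1 2 (by omega) (by omega) rfl]]
      exact CommRoot.caseCase
    | caseEps => right; simp only [subst]; exact CommRoot.caseEps

theorem step_subst {a b : Tm} (h : Step a b) : ∀ n s, Step (subst a n s) (subst b n s) := by
  induction h with
  | root hr => intro n s; exact .root (root_subst n s hr)
  | lam _ ih => intro n s; exact .lam (ih (n+1) (shift 0 1 s))
  | appL _ ih => intro n s; exact .appL (ih n s)
  | appR _ ih => intro n s; exact .appR (ih n s)
  | pairL _ ih => intro n s; exact .pairL (ih n s)
  | pairR _ ih => intro n s; exact .pairR (ih n s)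
  | inl _ ih => intro n s; exact .inl (ih n s)
  | inr _ ih => intro n s; exact .inr (ih n s)
  | proj1 _ ih => intro n s; exact .proj1 (ih n s)
  | proj2 _ ih => intro n s; exact .proj2 (ih n s)
  | caseW _ ih => intro n s; exact .caseW (ih n s)
  | caseS _ ih => intro n s; exact .caseS (ih (n+1) (shift 0 1 s))
  | caseT _ ih => intro n s; exact .caseT (ih (n+1) (shift 0 1 s))
  | eps _ ih => intro n s; exact .eps (ih n s)

/-- Multi-step congruence helper. -/
theorem rtg_congr {f : Tm → Tm} (hf : ∀ {x y}, Step x y → Step (f x) (f y))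
    {a b : Tm} (h : ReflTransGen Step a b) : ReflTransGen Step (f a) (f b) := by
  induction h with
  | refl => exact .refl
  | tail _ hstep ih => exact ih.tail (hf hstep)

theorem steps_subst_arg (t : Tm) : ∀ {s s' : Tm} (n : ℕ), Step s s' →
    ReflTransGen Step (subst t n s) (subst t n s') := by
  induction t <;> intro s s' n h <;> simp only [subst]
  case var m =>
    split_ifs
    · exact ReflTransGen.single h
    · exact .refl
    · exact .refl
  case lam σ t ih => exact rtg_congr (fun hs => .lam hs) (ih (n+1) (step_shift h 0 1))
  case app a b iha ihb =>
    exact .trans (rtg_congr (fun hs => .appL hs) (iha n h))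
      (rtg_congr (fun hs => .appR hs) (ihb n h))
  case pair a b iha ihb =>
    exact .trans (rtg_congr (fun hs => .pairL hs) (iha n h))
      (rtg_congr (fun hs => .pairR hs) (ihb n h))
  case inl _ _ a iha => exact rtg_congr (fun hs => .inl hs) (iha n h)
  case inr _ _ a iha => exact rtg_congr (fun hs => .inr hs) (iha n h)
  case proj1 a _ _ iha => exact rtg_congr (fun hs => .proj1 hs) (iha n h)
  case proj2 a _ _ iha => exact rtg_congr (fun hs => .proj2 hs) (iha n h)
  case case w σ τ bs bt δ ihw ihs iht =>
    refine .trans (rtg_congr (fun hs => .caseW hs) (ihw n h)) (.trans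
      (rtg_congr (fun hs => .caseS hs) (ihs (n+1) (step_shift h 0 1)))
      (rtg_congr (fun hs => .caseT hs) (iht (n+1) (step_shift h 0 1))))
  case eps a _ iha => exact rtg_congr (fun hs => .eps hs) (iha n h)

end Tm
open Relation

/-! ### Strong normalization predicate and Acc utilities -/

def SN (t : Tm) : Prop := Acc (fun a b => Step b a) t

theorem SN.step {t u : Tm} (h : SN t) (hs : Step t u) : SN u := h.inv hs

theorem SN.steps {t u : Tm} (h : SN t) (hs : ReflTransGen Step t u) : SN u := by
  induction hs with
  | refl => exact h
  | tail _ h2 ih => exact ih.step h2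

theorem sn_of_sim {α : Sort*} {r : α → α → Prop} (f : α → Tm)
    (hf : ∀ {x y}, r x y → Step (f x) (f y)) :
    ∀ {a : α}, SN (f a) → Acc (fun x y => r y x) a := by
  suffices H : ∀ b : Tm, SN b → ∀ a : α, f a = b → Acc (fun x y => r y x) a by
    intro a h; exact H _ h a rfl
  intro b hb
  induction hb with
  | intro b _ ih =>
    rintro a rfl
    exact ⟨a, fun y hy => ih (f y) (hf hy) y rfl⟩

theorem SN.of_sub {f : Tm → Tm} (hf : ∀ {x y}, Step x y → Step (f x) (f y))
    {t : Tm} (h : SN (f t)) : SN t := sn_of_sim f hf h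

/-- SN for the transitive closure. -/
theorem SN.tg {t : Tm} (h : SN t) : Acc (fun a b => TransGen Step b a) t := by
  have h2 := Acc.transGen h
  refine Subrelation.accessible ?_ h2
  intro x y hxy
  exact (Relation.transGen_swap (r := Step)).mpr hxy

/-! ### Inversion lemmas -/

theorem var_nostep {n : ℕ} {u : Tm} (h : Step (.var n) u) : False := by
  cases h with
  | root hr => rcases hr with h | h <;> cases h

theorem step_lam_inv {σ : Ty} {a u : Tm} (h : Step (.lam σ a) u) :
    ∃ b, Step a b ∧ u = .lam σ b := by
  cases h with
  | root hr => rcases hr with h | h <;> cases h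
  | lam h => exact ⟨_, h, rfl⟩

theorem step_pair_inv {a b u : Tm} (h : Step (.pair a b) u) :
    (∃ a', Step a a' ∧ u = .pair a' b) ∨ (∃ b', Step b b' ∧ u = .pair a b') := by
  cases h with
  | root hr => rcases hr with h | h <;> cases h
  | pairL h => exact .inl ⟨_, h, rfl⟩
  | pairR h => exact .inr ⟨_, h, rfl⟩

theorem step_inl_inv {σ τ : Ty} {a u : Tm} (h : Step (.inl σ τ a) u) :
    ∃ b, Step a b ∧ u = .inl σ τ b := by
  cases h with
  | root hr => rcases hr with h | h <;> cases h
  | inl h => exact ⟨_, h, rfl⟩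

theorem step_inr_inv {σ τ : Ty} {a u : Tm} (h : Step (.inr σ τ a) u) :
    ∃ b, Step a b ∧ u = .inr σ τ b := by
  cases h with
  | root hr => rcases hr with h | h <;> cases h
  | inr h => exact ⟨_, h, rfl⟩

theorem sn_var (n : ℕ) : SN (.var n) := ⟨_, fun _ h => absurd h var_nostep⟩

theorem SN.lam {σ : Ty} {a : Tm} (h : SN a) : SN (.lam σ a) := by
  induction h with
  | intro a _ ih =>
    constructor
    intro u hu
    obtain ⟨b, hb, rfl⟩ := step_lam_inv hu
    exact ih b hb

theorem SN.inl_cong {σ τ : Ty} {a : Tm} (h : SN a) : SN (.inl σ τ a) := by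
  induction h with
  | intro a _ ih =>
    constructor
    intro u hu
    obtain ⟨b, hb, rfl⟩ := step_inl_inv hu
    exact ih b hb

theorem SN.inr_cong {σ τ : Ty} {a : Tm} (h : SN a) : SN (.inr σ τ a) := by
  induction h with
  | intro a _ ih =>
    constructor
    intro u hu
    obtain ⟨b, hb, rfl⟩ := step_inr_inv hu
    exact ih b hb

theorem SN.pair {a b : Tm} (ha : SN a) (hb : SN b) : SN (.pair a b) := by
  induction ha generalizing b with
  | intro a _ iha =>
    induction hb with
    | intro b hb ihb =>
      constructor
      intro u hu
      rcases step_pair_inv hu with ⟨a', ha', rfl⟩ | ⟨b', hb', rfl⟩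
      · exact iha a' ha' ⟨b, hb⟩
      · exact ihb b' hb'

/-! ### Frames and stacks -/

inductive Fr : Type
  | fapp (u : Tm)
  | fp1 (σ τ : Ty)
  | fp2 (σ τ : Ty)
  | fcase (σ τ : Ty) (s t : Tm) (δ : Ty)
  | feps (σ : Ty)

def fill : Fr → Tm → Tm
  | .fapp u, t => .app t u
  | .fp1 σ τ, t => .proj1 t σ τ
  | .fp2 σ τ, t => .proj2 t σ τ
  | .fcase σ τ s b δ, t => .case t σ τ s b δ
  | .feps σ, t => .eps t σ

def plug : Tm → List Fr → Tm
  | t, [] => t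
  | t, F :: E => plug (fill F t) E

@[simp] theorem plug_nil (t : Tm) : plug t [] = t := rfl
@[simp] theorem plug_cons (t : Tm) (F : Fr) (E : List Fr) :
    plug t (F :: E) = plug (fill F t) E := rfl

theorem plug_append (t : Tm) (E₁ E₂ : List Fr) :
    plug t (E₁ ++ E₂) = plug (plug t E₁) E₂ := by
  induction E₁ generalizing t with
  | nil => rfl
  | cons F E ih => simp [ih]

theorem fill_step {F : Fr} {t t' : Tm} (h : Step t t') : Step (fill F t) (fill F t') := by
  cases F with
  | fapp u => exact .appL h
  | fp1 σ τ => exact .proj1 h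
  | fp2 σ τ => exact .proj2 h
  | fcase σ τ s b δ => exact .caseW h
  | feps σ => exact .eps h

theorem plug_step {t t' : Tm} (h : Step t t') : ∀ E, Step (plug t E) (plug t' E) := by
  intro E
  induction E generalizing t t' with
  | nil => exact h
  | cons F E ih => exact ih (fill_step h)

theorem plug_steps {t t' : Tm} (h : ReflTransGen Step t t') (E : List Fr) :
    ReflTransGen Step (plug t E) (plug t' E) :=
  Tm.rtg_congr (fun hs => plug_step hs E) h

/-- Steps inside a frame. -/
inductive FrStep : Fr → Fr → Prop
  | fapp {u u'} : Step u u' → FrStep (.fapp u) (.fapp u')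
  | fcaseS {σ τ s s' t δ} : Step s s' → FrStep (.fcase σ τ s t δ) (.fcase σ τ s' t δ)
  | fcaseT {σ τ s t t' δ} : Step t t' → FrStep (.fcase σ τ s t δ) (.fcase σ τ s t' δ)

theorem fill_frstep {F F' : Fr} (h : FrStep F F') (t : Tm) : Step (fill F t) (fill F' t) := by
  cases h with
  | fapp h => exact .appR h
  | fcaseS h => exact .caseS h
  | fcaseT h => exact .caseT h

/-- Steps of a stack alone: internal frame steps and frame–frame commutations. -/
inductive EStep : List Fr → List Fr → Prop
  | frame {F F' E} : FrStep F F' → EStep (F :: E) (F' :: E)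
  | tail {F E E'} : EStep E E' → EStep (F :: E) (F :: E')
  | caseApp {σ τ s t α β u E} :
      EStep (.fcase σ τ s t (.arr α β) :: .fapp u :: E)
            (.fcase σ τ (.app s (u.shift 0 1)) (.app t (u.shift 0 1)) β :: E)
  | casePi1 {σ τ s t α β E} :
      EStep (.fcase σ τ s t (.and α β) :: .fp1 α β :: E)
            (.fcase σ τ (.proj1 s α β) (.proj1 t α β) α :: E)
  | casePi2 {σ τ s t α β E} :
      EStep (.fcase σ τ s t (.and α β) :: .fp2 α β :: E)
            (.fcase σ τ (.proj2 s α β) (.proj2 t α β) β :: E)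
  | caseCase {σ τ s t α β a b δ E} :
      EStep (.fcase σ τ s t (.or α β) :: .fcase α β a b δ :: E)
            (.fcase σ τ (.case s α β (a.shift 1 1) (b.shift 1 1) δ)
                        (.case t α β (a.shift 1 1) (b.shift 1 1) δ) δ :: E)
  | caseEps {σ τ s t α E} :
      EStep (.fcase σ τ s t .bot :: .feps α :: E)
            (.fcase σ τ (.eps s α) (.eps t α) α :: E)
  | epsApp {σ τ u E} : EStep (.feps (.arr σ τ) :: .fapp u :: E) (.feps τ :: E)
  | epsPi1 {σ τ E} : EStep (.feps (.and σ τ) :: .fp1 σ τ :: E) (.feps σ :: E)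
  | epsPi2 {σ τ E} : EStep (.feps (.and σ τ) :: .fp2 σ τ :: E) (.feps τ :: E)
  | epsCase {σ τ s t δ E} : EStep (.feps (.or σ τ) :: .fcase σ τ s t δ :: E) (.feps δ :: E)
  | epsEps {σ E} : EStep (.feps .bot :: .feps σ :: E) (.feps σ :: E)

theorem estep_plug {E E' : List Fr} (h : EStep E E') : ∀ t, Step (plug t E) (plug t E') := by
  induction h with
  | frame h => exact fun t => plug_step (fill_frstep h t) _
  | tail _ ih => exact fun t => ih _
  | caseApp => exact fun t => plug_step (.root (.inr .caseApp)) _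
  | casePi1 => exact fun t => plug_step (.root (.inr .casePi1)) _
  | casePi2 => exact fun t => plug_step (.root (.inr .casePi2)) _
  | caseCase => exact fun t => plug_step (.root (.inr .caseCase)) _
  | caseEps => exact fun t => plug_step (.root (.inr .caseEps)) _
  | epsApp => exact fun t => plug_step (.root (.inr .epsApp)) _
  | epsPi1 => exact fun t => plug_step (.root (.inr .epsPi1)) _
  | epsPi2 => exact fun t => plug_step (.root (.inr .epsPi2)) _
  | epsCase => exact fun t => plug_step (.root (.inr .epsCase)) _
  | epsEps => exact fun t => plug_step (.root (.inr .epsEps)) _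

/-- Decomposition of a step of a plugged term. -/
theorem step_plug_inv : ∀ (E : List Fr) (t u : Tm), Step (plug t E) u →
    (∃ t', Step t t' ∧ u = plug t' E) ∨
    (∃ E', EStep E E' ∧ u = plug t E') ∨
    (∃ F E₁ r, E = F :: E₁ ∧ Root (fill F t) r ∧ u = plug r E₁) := by
  intro E
  induction E with
  | nil => exact fun t u h => .inl ⟨u, h, rfl⟩
  | cons F E₁ ih =>
    intro t u h
    rcases ih (fill F t) u h with ⟨t'', h2, rfl⟩ | ⟨E', hE, rfl⟩ | ⟨F₂, E₂, r, rfl, hr, rfl⟩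
    · -- a step of `fill F t`
      cases F with
      | fapp v =>
        cases h2 with
        | root hr => exact .inr (.inr ⟨_, _, _, rfl, hr, rfl⟩)
        | appL h3 => exact .inl ⟨_, h3, rfl⟩
        | appR h3 => exact .inr (.inl ⟨_, .frame (.fapp h3), rfl⟩)
      | fp1 σ τ =>
        cases h2 with
        | root hr => exact .inr (.inr ⟨_, _, _, rfl, hr, rfl⟩)
        | proj1 h3 => exact .inl ⟨_, h3, rfl⟩
      | fp2 σ τ =>
        cases h2 with
        | root hr => exact .inr (.inr ⟨_, _, _, rfl, hr, rfl⟩)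
        | proj2 h3 => exact .inl ⟨_, h3, rfl⟩
      | fcase σ τ s b δ =>
        cases h2 with
        | root hr => exact .inr (.inr ⟨_, _, _, rfl, hr, rfl⟩)
        | caseW h3 => exact .inl ⟨_, h3, rfl⟩
        | caseS h3 => exact .inr (.inl ⟨_, .frame (.fcaseS h3), rfl⟩)
        | caseT h3 => exact .inr (.inl ⟨_, .frame (.fcaseT h3), rfl⟩)
      | feps σ =>
        cases h2 with
        | root hr => exact .inr (.inr ⟨_, _, _, rfl, hr, rfl⟩)
        | eps h3 => exact .inl ⟨_, h3, rfl⟩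
    · exact .inr (.inl ⟨_, .tail hE, rfl⟩)
    · -- a root redex of `fill F₂ (fill F t)` : frame–frame interaction
      cases F with
      | fapp v =>
        exfalso
        cases F₂ <;> simp only [fill] at hr <;> rcases hr with h | h <;> cases h
      | fp1 σ τ =>
        exfalso
        cases F₂ <;> simp only [fill] at hr <;> rcases hr with h | h <;> cases h
      | fp2 σ τ =>
        exfalso
        cases F₂ <;> simp only [fill] at hr <;> rcases hr with h | h <;> cases h
      | fcase σ τ s b δ =>
        cases F₂ with
        | fapp w =>
          simp only [fill] at hr
          rcases hr with h | h <;> cases h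
          exact .inr (.inl ⟨_, .caseApp, rfl⟩)
        | fp1 α β =>
          simp only [fill] at hr
          rcases hr with h | h <;> cases h
          exact .inr (.inl ⟨_, .casePi1, rfl⟩)
        | fp2 α β =>
          simp only [fill] at hr
          rcases hr with h | h <;> cases h
          exact .inr (.inl ⟨_, .casePi2, rfl⟩)
        | fcase α β a b' δ' =>
          simp only [fill] at hr
          rcases hr with h | h <;> cases h
          exact .inr (.inl ⟨_, .caseCase, rfl⟩)
        | feps α =>
          simp only [fill] at hr
          rcases hr with h | h <;> cases h
          exact .inr (.inl ⟨_, .caseEps, rfl⟩)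
      | feps σ =>
        cases F₂ with
        | fapp w =>
          simp only [fill] at hr
          rcases hr with h | h <;> cases h
          exact .inr (.inl ⟨_, .epsApp, rfl⟩)
        | fp1 α β =>
          simp only [fill] at hr
          rcases hr with h | h <;> cases h
          exact .inr (.inl ⟨_, .epsPi1, rfl⟩)
        | fp2 α β =>
          simp only [fill] at hr
          rcases hr with h | h <;> cases h
          exact .inr (.inl ⟨_, .epsPi2, rfl⟩)
        | fcase α β a b' δ' =>
          simp only [fill] at hr
          rcases hr with h | h <;> cases h
          exact .inr (.inl ⟨_, .epsCase, rfl⟩)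
        | feps α =>
          simp only [fill] at hr
          rcases hr with h | h <;> cases h
          exact .inr (.inl ⟨_, .epsEps, rfl⟩)

/-- No root redex with a variable in the hole. -/
theorem root_fill_var {F : Fr} {n : ℕ} {r : Tm} (h : Root (fill F (.var n)) r) : False := by
  cases F <;> simp only [fill] at h <;> rcases h with h | h <;> cases h

/-- Steps of a var-headed plugged term are exactly stack steps. -/
theorem step_plug_var_inv {n : ℕ} {E : List Fr} {u : Tm} (h : Step (plug (.var n) E) u) :
    ∃ E', EStep E E' ∧ u = plug (.var n) E' := by
  rcases step_plug_inv E _ u h with ⟨t', h1, _⟩ | ⟨E', hE, rfl⟩ | ⟨F, E₁, r, rfl, hr, rfl⟩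
  · exact absurd h1 var_nostep
  · exact ⟨E', hE, rfl⟩
  · exact absurd hr root_fill_var
/-! ### Stack strong normalization machinery -/

theorem acc_of_sim {α : Sort*} {β : Sort*} {r : α → α → Prop} {s : β → β → Prop}
    (f : α → β) (hf : ∀ {x y}, r x y → s (f x) (f y)) :
    ∀ {a : α}, Acc (fun x y => s y x) (f a) → Acc (fun x y => r y x) a := by
  suffices H : ∀ b, Acc (fun x y => s y x) b → ∀ a, f a = b → Acc (fun x y => r y x) a from
    fun {a} h => H _ h a rfl
  intro b hb
  induction hb with
  | intro b _ ih =>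
    rintro a rfl
    exact ⟨a, fun y hy => ih (f y) (hf hy) y rfl⟩

theorem rtg_cases {α : Type*} {r : α → α → Prop} {a b : α} (h : ReflTransGen r a b) :
    b = a ∨ TransGen r a b := Relation.reflTransGen_iff_eq_or_transGen.mp h

def SNE (E : List Fr) : Prop := Acc (fun E1 E2 => EStep E2 E1) E

theorem SNE.of_plug_var {n : ℕ} {E : List Fr} (h : SN (plug (.var n) E)) : SNE E :=
  acc_of_sim (f := fun E => plug (.var n) E) (fun hE => estep_plug hE _) h

theorem sn_plug_var {E : List Fr} (h : SNE E) (n : ℕ) : SN (plug (.var n) E) := by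
  induction h with
  | intro E _ ih =>
    constructor
    intro u hu
    obtain ⟨E', hE, rfl⟩ := step_plug_var_inv hu
    exact ih E' hE

theorem sn_var_swap {m n : ℕ} {E : List Fr} (h : SN (plug (.var m) E)) :
    SN (plug (.var n) E) := sn_plug_var (SNE.of_plug_var h) n

theorem sn_plug_var_drop {n : ℕ} {F : Fr} {E : List Fr} (h : SN (plug (.var n) (F :: E))) :
    SN (plug (.var n) E) :=
  sn_plug_var (acc_of_sim (f := fun E => F :: E) (fun hE => EStep.tail hE)
    (SNE.of_plug_var h)) n

theorem estep_length {E E' : List Fr} (h : EStep E E') : E'.length ≤ E.length := by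
  induction h <;> simp [List.length] <;> omega

/-- Applicative frames: never the inner frame of a commutation. -/
def AppFr : Fr → Prop
  | .fapp _ => True
  | .fp1 _ _ => True
  | .fp2 _ _ => True
  | _ => False

theorem appFr_fapp (u : Tm) : AppFr (.fapp u) := trivial
theorem appFr_fp1 (σ τ : Ty) : AppFr (.fp1 σ τ) := trivial
theorem appFr_fp2 (σ τ : Ty) : AppFr (.fp2 σ τ) := trivial

theorem estep_app_cons_inv {F : Fr} {E X : List Fr} (hF : AppFr F) (h : EStep (F :: E) X) :
    (∃ u u', F = .fapp u ∧ Step u u' ∧ X = .fapp u' :: E) ∨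
    (∃ E', EStep E E' ∧ X = F :: E') := by
  cases h with
  | frame hf =>
    cases hf with
    | fapp hu => exact .inl ⟨_, _, rfl, hu, rfl⟩
    | fcaseS h => exact hF.elim
    | fcaseT h => exact hF.elim
  | tail hE => exact .inr ⟨_, hE, rfl⟩
  | caseApp => exact hF.elim
  | casePi1 => exact hF.elim
  | casePi2 => exact hF.elim
  | caseCase => exact hF.elim
  | caseEps => exact hF.elim
  | epsApp => exact hF.elim
  | epsPi1 => exact hF.elim
  | epsPi2 => exact hF.elim
  | epsCase => exact hF.elim
  | epsEps => exact hF.elim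

@[simp] theorem subst0_shift01 (u x : Tm) : (Tm.shift 0 1 u).subst 0 x = u := by
  rw [Tm.subst_shift_cancel u x 0 1 0 0 (by omega) (by omega) rfl, Tm.shift_zero]

@[simp] theorem subst1_shift11 (a x : Tm) : (Tm.shift 1 1 a).subst 1 x = a := by
  rw [Tm.subst_shift_cancel a x 1 1 1 0 (by omega) (by omega) rfl, Tm.shift_zero]

theorem estep_case_cons_inv {σ τ : Ty} {s t : Tm} {δ : Ty} {E X : List Fr}
    (h : EStep (.fcase σ τ s t δ :: E) X) :
    (∃ s', Step s s' ∧ X = .fcase σ τ s' t δ :: E) ∨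
    (∃ t', Step t t' ∧ X = .fcase σ τ s t' δ :: E) ∨
    (∃ E', EStep E E' ∧ X = .fcase σ τ s t δ :: E') ∨
    (∃ F E₁ s' t' δ', E = F :: E₁ ∧ X = .fcase σ τ s' t' δ' :: E₁ ∧
      (∀ x, s'.subst 0 x = fill F (s.subst 0 x)) ∧
      (∀ x, t'.subst 0 x = fill F (t.subst 0 x))) := by
  cases h with
  | frame hf =>
    cases hf with
    | fcaseS h => exact .inl ⟨_, h, rfl⟩
    | fcaseT h => exact .inr (.inl ⟨_, h, rfl⟩)
  | tail hE => exact .inr (.inr (.inl ⟨_, hE, rfl⟩))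
  | @caseApp σ τ s t α β u E =>
    refine .inr (.inr (.inr ⟨.fapp u, E, _, _, β, rfl, rfl, ?_, ?_⟩)) <;>
      intro x <;> simp [Tm.subst, fill]
  | @casePi1 σ τ s t α β E =>
    refine .inr (.inr (.inr ⟨.fp1 α β, E, _, _, α, rfl, rfl, ?_, ?_⟩)) <;>
      intro x <;> simp [Tm.subst, fill]
  | @casePi2 σ τ s t α β E =>
    refine .inr (.inr (.inr ⟨.fp2 α β, E, _, _, β, rfl, rfl, ?_, ?_⟩)) <;>
      intro x <;> simp [Tm.subst, fill]
  | @caseCase σ τ s t α β a b δ' E =>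
    refine .inr (.inr (.inr ⟨.fcase α β a b δ', E, _, _, δ', rfl, rfl, ?_, ?_⟩)) <;>
      intro x <;> simp [Tm.subst, fill]
  | @caseEps σ τ s t α E =>
    refine .inr (.inr (.inr ⟨.feps α, E, _, _, α, rfl, rfl, ?_, ?_⟩)) <;>
      intro x <;> simp [Tm.subst, fill]

theorem estep_eps_cons_inv {σ : Ty} {E X : List Fr} (h : EStep (.feps σ :: E) X) :
    (∃ E', EStep E E' ∧ X = .feps σ :: E') ∨
    (∃ F E₁ σ', E = F :: E₁ ∧ X = .feps σ' :: E₁) := by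
  cases h with
  | frame hf => cases hf
  | tail hE => exact .inl ⟨_, hE, rfl⟩
  | epsApp => exact .inr ⟨_, _, _, rfl, rfl⟩
  | epsPi1 => exact .inr ⟨_, _, _, rfl, rfl⟩
  | epsPi2 => exact .inr ⟨_, _, _, rfl, rfl⟩
  | epsCase => exact .inr ⟨_, _, _, rfl, rfl⟩
  | epsEps => exact .inr ⟨_, _, _, rfl, rfl⟩
/-! ### Key SN lemmas -/

theorem AccTG.sn {t : Tm} (h : Acc (fun a b => TransGen Step b a) t) : SN t := by
  induction h with
  | intro t _ ih => exact ⟨t, fun y hy => ih y (TransGen.single hy)⟩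

theorem prep_fapp : ∀ P : Tm, Acc (fun a b => TransGen Step b a) P →
    ∀ E, plug (.var 0) E = P → ∀ u, SN u → ∀ n, SN (plug (.var n) (.fapp u :: E)) := by
  intro P hP
  induction hP with
  | intro P hacc ihP =>
    rintro E rfl u hu
    induction hu with
    | intro u hu' ihu =>
      intro n
      constructor
      intro X hX
      obtain ⟨E', hE, rfl⟩ := step_plug_var_inv hX
      rcases estep_app_cons_inv (appFr_fapp u) hE with ⟨u0, u', hu0, hstep, rfl⟩ | ⟨E₁, hE₁, rfl⟩
      · injection hu0 with h0
        subst h0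
        exact ihu _ hstep n
      · exact ihP _ (TransGen.single (estep_plug hE₁ _)) E₁ rfl u ⟨u, hu'⟩ n

theorem prep_other : ∀ P : Tm, Acc (fun a b => TransGen Step b a) P →
    ∀ E, plug (.var 0) E = P → ∀ F, AppFr F → (∀ u, F ≠ .fapp u) →
    ∀ n, SN (plug (.var n) (F :: E)) := by
  intro P hP
  induction hP with
  | intro P hacc ihP =>
    rintro E rfl F hF hne n
    constructor
    intro X hX
    obtain ⟨E', hE, rfl⟩ := step_plug_var_inv hX
    rcases estep_app_cons_inv hF hE with ⟨u0, u', hu0, _, _⟩ | ⟨E₁, hE₁, rfl⟩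
    · exact absurd hu0 (hne u0)
    · exact ihP _ (TransGen.single (estep_plug hE₁ _)) E₁ rfl F hF hne n

theorem prepend {E₀ : List Fr} (h : SN (plug (.var 0) E₀)) :
    ∀ Eacc, (∀ F ∈ Eacc, AppFr F) → (∀ u, Fr.fapp u ∈ Eacc → SN u) →
    ∀ n, SN (plug (.var n) (Eacc ++ E₀)) := by
  intro Eacc
  induction Eacc with
  | nil => intro _ _ n; exact sn_var_swap h
  | cons F rest ih =>
    intro hApp hSN n
    have hrest := ih (fun F hF => hApp F (List.mem_cons_of_mem _ hF))
      (fun u hu => hSN u (List.mem_cons_of_mem _ hu)) 0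
    by_cases hc : ∃ u, F = .fapp u
    · obtain ⟨u, rfl⟩ := hc
      exact prep_fapp _ hrest.tg _ rfl u (hSN u List.mem_cons_self) n
    · push_neg at hc
      exact prep_other _ hrest.tg _ rfl F (hApp F List.mem_cons_self) hc n

theorem sn_eps_var : ∀ (k : ℕ) (P : Tm), Acc (fun a b => TransGen Step b a) P →
    ∀ E, E.length ≤ k → plug (.var 0) E = P →
    ∀ (n : ℕ) (σ : Ty), SN (plug (.var n) (.feps σ :: E)) := by
  intro k
  induction k using Nat.strong_induction_on with
  | _ k ihk =>
    intro P hP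
    induction hP with
    | intro P hacc ihP =>
      rintro E hlen rfl n σ
      constructor
      intro X hX
      obtain ⟨E', hE, rfl⟩ := step_plug_var_inv hX
      rcases estep_eps_cons_inv hE with ⟨E₁, hE₁, rfl⟩ | ⟨F, E₁, σ', rfl, rfl⟩
      · exact ihP _ (TransGen.single (estep_plug hE₁ _)) E₁
          (le_trans (estep_length hE₁) hlen) rfl n σ
      · have hsn : SN (plug (.var 0) (F :: E₁)) := AccTG.sn ⟨_, hacc⟩
        have hdrop := sn_plug_var_drop hsn
        exact ihk E₁.length (by simp at hlen; omega) _ hdrop.tg E₁ le_rfl rfl n σ'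

theorem sn_case_var : ∀ (k : ℕ) (P₁ : Tm), Acc (fun a b => TransGen Step b a) P₁ →
    ∀ (P₂ : Tm), Acc (fun a b => TransGen Step b a) P₂ →
    ∀ E s t, E.length ≤ k →
    plug (s.subst 0 (.var 0)) E = P₁ → plug (t.subst 0 (.var 0)) E = P₂ →
    ∀ (n : ℕ) (σ τ π : Ty), SN (plug (.var n) (.fcase σ τ s t π :: E)) := by
  intro k
  induction k using Nat.strong_induction_on with
  | _ k ihk =>
    intro P₁ hP₁
    induction hP₁ with
    | intro P₁ hacc1 ihP₁ =>
      intro P₂ hP₂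
      induction hP₂ with
      | intro P₂ hacc2 ihP₂ =>
        rintro E s t hlen rfl heq2 n σ τ π
        constructor
        intro X hX
        obtain ⟨E', hE, rfl⟩ := step_plug_var_inv hX
        rcases estep_case_cons_inv hE with ⟨s', hs, rfl⟩ | ⟨t', ht, rfl⟩ |
          ⟨E₁, hE₁, rfl⟩ | ⟨F, E₁, s', t', δ', rfl, rfl, hs', ht'⟩
        · exact ihP₁ _ (TransGen.single (plug_step (Tm.step_subst hs 0 (.var 0)) E)) _
            ⟨_, hacc2⟩ E s' t hlen rfl heq2 n σ τ π
        · subst heq2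
          exact ihP₂ _ (TransGen.single (plug_step (Tm.step_subst ht 0 (.var 0)) E))
            E s t' hlen rfl rfl n σ τ π
        · subst heq2
          exact ihP₁ _ (TransGen.single (estep_plug hE₁ _)) _
            (hacc2 _ (TransGen.single (estep_plug hE₁ _))) E₁ s t
            (le_trans (estep_length hE₁) hlen) rfl rfl n σ τ π
        · subst heq2
          refine ihk E₁.length (by simp at hlen; omega) _ ?_ _ ?_ E₁ s' t' le_rfl rfl rfl n σ τ δ'
          · rw [hs' (.var 0)]
            exact ⟨_, hacc1⟩
          · rw [ht' (.var 0)]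
            exact ⟨_, hacc2⟩

/-- Head expansion for β at the head of a stack. -/
theorem sn_beta_aux : ∀ P : Tm, Acc (fun a b => TransGen Step b a) P →
    ∀ a, SN a → ∀ b E σ, plug (b.subst 0 a) E = P →
    SN (plug (.lam σ b) (.fapp a :: E)) := by
  intro P hP
  induction hP with
  | intro P hacc ihP =>
    intro a ha
    induction ha with
    | intro a ha' iha =>
      rintro b E σ rfl
      constructor
      intro X hX
      rcases step_plug_inv _ _ _ hX with ⟨t', h1, rfl⟩ | ⟨E', hE, rfl⟩ |
        ⟨F, E₁, r, hcons, hr, rfl⟩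
      · obtain ⟨b', hb, rfl⟩ := step_lam_inv h1
        exact ihP _ (TransGen.single (plug_step (Tm.step_subst hb 0 a) E)) a ⟨a, ha'⟩ b' E σ rfl
      · rcases estep_app_cons_inv (appFr_fapp a) hE with ⟨u0, a', hu0, hstep, rfl⟩ | ⟨E₁, hE₁, rfl⟩
        · injection hu0 with h0
          subst h0
          have hmulti := plug_steps (Tm.steps_subst_arg b 0 hstep) E
          rcases rtg_cases hmulti with heq | htg
          · exact iha a' hstep b E σ heq
          · exact ihP _ htg a' (ha' a' hstep) b E σ rfl
        · exact ihP _ (TransGen.single (estep_plug hE₁ _)) a ⟨a, ha'⟩ b E₁ σ rfl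
      · injection hcons with h1 h2
        subst h1; subst h2
        rcases hr with h | h <;> cases h
        exact AccTG.sn ⟨_, hacc⟩

/-- Head expansion for π₁. -/
theorem sn_proj1_aux : ∀ P : Tm, Acc (fun a b => TransGen Step b a) P →
    ∀ nn, SN nn → ∀ m E σ τ, plug m E = P →
    SN (plug (.pair m nn) (.fp1 σ τ :: E)) := by
  intro P hP
  induction hP with
  | intro P hacc ihP =>
    intro nn hnn
    induction hnn with
    | intro nn hnn' ihnn =>
      rintro m E σ τ rfl
      constructor
      intro X hX
      rcases step_plug_inv _ _ _ hX with ⟨t', h1, rfl⟩ | ⟨E', hE, rfl⟩ |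
        ⟨F, E₁, r, hcons, hr, rfl⟩
      · rcases step_pair_inv h1 with ⟨m', hm, rfl⟩ | ⟨nn', hn, rfl⟩
        · exact ihP _ (TransGen.single (plug_step hm E)) nn ⟨nn, hnn'⟩ m' E σ τ rfl
        · exact ihnn nn' hn m E σ τ rfl
      · rcases estep_app_cons_inv (appFr_fp1 σ τ) hE with ⟨u0, u', hu0, _, _⟩ | ⟨E₁, hE₁, rfl⟩
        · exact Fr.noConfusion hu0
        · exact ihP _ (TransGen.single (estep_plug hE₁ _)) nn ⟨nn, hnn'⟩ m E₁ σ τ rfl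
      · injection hcons with h1 h2
        subst h1; subst h2
        rcases hr with h | h <;> cases h
        exact AccTG.sn ⟨_, hacc⟩

/-- Head expansion for π₂. -/
theorem sn_proj2_aux : ∀ P : Tm, Acc (fun a b => TransGen Step b a) P →
    ∀ mm, SN mm → ∀ n E σ τ, plug n E = P →
    SN (plug (.pair mm n) (.fp2 σ τ :: E)) := by
  intro P hP
  induction hP with
  | intro P hacc ihP =>
    intro mm hmm
    induction hmm with
    | intro mm hmm' ihmm =>
      rintro n E σ τ rfl
      constructor
      intro X hX
      rcases step_plug_inv _ _ _ hX with ⟨t', h1, rfl⟩ | ⟨E', hE, rfl⟩ |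
        ⟨F, E₁, r, hcons, hr, rfl⟩
      · rcases step_pair_inv h1 with ⟨mm', hm, rfl⟩ | ⟨n', hn, rfl⟩
        · exact ihmm mm' hm n E σ τ rfl
        · exact ihP _ (TransGen.single (plug_step hn E)) mm ⟨mm, hmm'⟩ n' E σ τ rfl
      · rcases estep_app_cons_inv (appFr_fp2 σ τ) hE with ⟨u0, u', hu0, _, _⟩ | ⟨E₁, hE₁, rfl⟩
        · exact Fr.noConfusion hu0
        · exact ihP _ (TransGen.single (estep_plug hE₁ _)) mm ⟨mm, hmm'⟩ n E₁ σ τ rfl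
      · injection hcons with h1 h2
        subst h1; subst h2
        rcases hr with h | h <;> cases h
        exact AccTG.sn ⟨_, hacc⟩
/-! ### Head expansion for case on injections -/

theorem sn_case_inl_aux : ∀ (k : ℕ) (P₁ : Tm), Acc (fun a b => TransGen Step b a) P₁ →
    ∀ (P₂ : Tm), Acc (fun a b => TransGen Step b a) P₂ →
    ∀ a, SN a → ∀ s t c E σ τ δ, E.length ≤ k →
    plug (s.subst 0 a) E = P₁ → plug (t.subst 0 c) E = P₂ →
    SN (plug (.inl σ τ a) (.fcase σ τ s t δ :: E)) := by
  intro k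
  induction k using Nat.strong_induction_on with
  | _ k ihk =>
    intro P₁ hP₁
    induction hP₁ with
    | intro P₁ hacc1 ihP₁ =>
      intro P₂ hP₂
      induction hP₂ with
      | intro P₂ hacc2 ihP₂ =>
        intro a ha
        induction ha with
        | intro a ha' iha =>
          rintro s t c E σ τ δ hlen rfl heq2
          constructor
          intro X hX
          rcases step_plug_inv _ _ _ hX with ⟨t', h1, rfl⟩ | ⟨E', hE, rfl⟩ |
            ⟨F, E₁, r, hcons, hr, rfl⟩
          · obtain ⟨a', hstep, rfl⟩ := step_inl_inv h1
            have hmulti := plug_steps (Tm.steps_subst_arg s 0 hstep) E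
            rcases rtg_cases hmulti with heq | htg
            · exact iha a' hstep s t c E σ τ δ hlen heq heq2
            · exact ihP₁ _ htg _ ⟨_, hacc2⟩ a' (ha' a' hstep) s t c E σ τ δ hlen rfl heq2
          · rcases estep_case_cons_inv hE with ⟨s', hs, rfl⟩ | ⟨t', ht, rfl⟩ |
              ⟨E₁, hE₁, rfl⟩ | ⟨F, E₁, s', t', δ', rfl, rfl, hs', ht'⟩
            · exact ihP₁ _ (TransGen.single (plug_step (Tm.step_subst hs 0 a) E)) _
                ⟨_, hacc2⟩ a ⟨a, ha'⟩ s' t c E σ τ δ hlen rfl heq2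
            · subst heq2
              exact ihP₂ _ (TransGen.single (plug_step (Tm.step_subst ht 0 c) E))
                a ⟨a, ha'⟩ s t' c E σ τ δ hlen rfl rfl
            · subst heq2
              exact ihP₁ _ (TransGen.single (estep_plug hE₁ _)) _
                (hacc2 _ (TransGen.single (estep_plug hE₁ _))) a ⟨a, ha'⟩ s t c E₁ σ τ δ
                (le_trans (estep_length hE₁) hlen) rfl rfl
            · subst heq2
              refine ihk E₁.length (by simp at hlen; omega) _ ?_ _ ?_ a ⟨a, ha'⟩
                s' t' c E₁ σ τ δ' le_rfl rfl rfl
              · rw [hs' a]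
                exact ⟨_, hacc1⟩
              · rw [ht' c]
                exact ⟨_, hacc2⟩
          · injection hcons with h1 h2
            subst h1; subst h2
            rcases hr with h | h <;> cases h
            exact AccTG.sn ⟨_, hacc1⟩

theorem sn_case_inr_aux : ∀ (k : ℕ) (P₁ : Tm), Acc (fun a b => TransGen Step b a) P₁ →
    ∀ (P₂ : Tm), Acc (fun a b => TransGen Step b a) P₂ →
    ∀ a, SN a → ∀ s t c E σ τ δ, E.length ≤ k →
    plug (s.subst 0 c) E = P₁ → plug (t.subst 0 a) E = P₂ →
    SN (plug (.inr σ τ a) (.fcase σ τ s t δ :: E)) := by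
  intro k
  induction k using Nat.strong_induction_on with
  | _ k ihk =>
    intro P₁ hP₁
    induction hP₁ with
    | intro P₁ hacc1 ihP₁ =>
      intro P₂ hP₂
      induction hP₂ with
      | intro P₂ hacc2 ihP₂ =>
        intro a ha
        induction ha with
        | intro a ha' iha =>
          rintro s t c E σ τ δ hlen heq1 rfl
          constructor
          intro X hX
          rcases step_plug_inv _ _ _ hX with ⟨t', h1, rfl⟩ | ⟨E', hE, rfl⟩ |
            ⟨F, E₁, r, hcons, hr, rfl⟩
          · obtain ⟨a', hstep, rfl⟩ := step_inr_inv h1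
            have hmulti := plug_steps (Tm.steps_subst_arg t 0 hstep) E
            rcases rtg_cases hmulti with heq | htg
            · exact iha a' hstep s t c E σ τ δ hlen heq1 heq
            · subst heq1
              exact ihP₂ _ htg a' (ha' a' hstep) s t c E σ τ δ hlen rfl rfl
          · rcases estep_case_cons_inv hE with ⟨s', hs, rfl⟩ | ⟨t', ht, rfl⟩ |
              ⟨E₁, hE₁, rfl⟩ | ⟨F, E₁, s', t', δ', rfl, rfl, hs', ht'⟩
            · subst heq1
              exact ihP₁ _ (TransGen.single (plug_step (Tm.step_subst hs 0 c) E)) _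
                ⟨_, hacc2⟩ a ⟨a, ha'⟩ s' t c E σ τ δ hlen rfl rfl
            · subst heq1
              exact ihP₂ _ (TransGen.single (plug_step (Tm.step_subst ht 0 a) E))
                a ⟨a, ha'⟩ s t' c E σ τ δ hlen rfl rfl
            · subst heq1
              exact ihP₁ _ (TransGen.single (estep_plug hE₁ _)) _
                (hacc2 _ (TransGen.single (estep_plug hE₁ _))) a ⟨a, ha'⟩ s t c E₁ σ τ δ
                (le_trans (estep_length hE₁) hlen) rfl rfl
            · subst heq1
              refine ihk E₁.length (by simp at hlen; omega) _ ?_ _ ?_ a ⟨a, ha'⟩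
                s' t' c E₁ σ τ δ' le_rfl rfl rfl
              · rw [hs' c]
                exact ⟨_, hacc1⟩
              · rw [ht' a]
                exact ⟨_, hacc2⟩
          · injection hcons with h1 h2
            subst h1; subst h2
            rcases hr with h | h <;> cases h
            exact AccTG.sn ⟨_, hacc2⟩

/-! ### Wrappers -/

theorem sn_beta {σ : Ty} {b a : Tm} {E : List Fr} (ha : SN a)
    (h : SN (plug (b.subst 0 a) E)) : SN (plug (.app (.lam σ b) a) E) :=
  sn_beta_aux _ h.tg a ha b E σ rfl

theorem sn_proj1 {σ τ : Ty} {m n : Tm} {E : List Fr} (hn : SN n)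
    (h : SN (plug m E)) : SN (plug (.proj1 (.pair m n) σ τ) E) :=
  sn_proj1_aux _ h.tg n hn m E σ τ rfl

theorem sn_proj2 {σ τ : Ty} {m n : Tm} {E : List Fr} (hm : SN m)
    (h : SN (plug n E)) : SN (plug (.proj2 (.pair m n) σ τ) E) :=
  sn_proj2_aux _ h.tg m hm n E σ τ rfl

theorem sn_case_inl {σ τ δ : Ty} {a s t c : Tm} {E : List Fr} (ha : SN a)
    (h1 : SN (plug (s.subst 0 a) E)) (h2 : SN (plug (t.subst 0 c) E)) :
    SN (plug (.case (.inl σ τ a) σ τ s t δ) E) :=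
  sn_case_inl_aux E.length _ h1.tg _ h2.tg a ha s t c E σ τ δ le_rfl rfl rfl

theorem sn_case_inr {σ τ δ : Ty} {a s t c : Tm} {E : List Fr} (ha : SN a)
    (h1 : SN (plug (s.subst 0 c) E)) (h2 : SN (plug (t.subst 0 a) E)) :
    SN (plug (.case (.inr σ τ a) σ τ s t δ) E) :=
  sn_case_inr_aux E.length _ h1.tg _ h2.tg a ha s t c E σ τ δ le_rfl rfl rfl

theorem sn_case_var' {n : ℕ} {σ τ π : Ty} {s t : Tm} {E : List Fr}
    (h1 : SN (plug (s.subst 0 (.var 0)) E)) (h2 : SN (plug (t.subst 0 (.var 0)) E)) :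
    SN (plug (.case (.var n) σ τ s t π) E) :=
  sn_case_var E.length _ h1.tg _ h2.tg E s t le_rfl rfl rfl n σ τ π

theorem sn_eps_var' {n : ℕ} {σ : Ty} {E : List Fr} (h : SN (plug (.var 0) E)) :
    SN (plug (.eps (.var n) σ) E) :=
  sn_eps_var E.length _ h.tg E le_rfl rfl n σ
/-! ### Reducibility -/

def Red : Ty → Tm → Prop
  | .base _, t => SN t
  | .bot, t => ∀ E, SN (plug (.var 0) E) → SN (plug t E)
  | .arr σ τ, t => SN t ∧ ∀ a, Red σ a → Red τ (.app t a)
  | .and σ τ, t => SN t ∧ Red σ (.proj1 t σ τ) ∧ Red τ (.proj2 t σ τ)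
  | .or σ τ, t => ∀ E, SN (plug (.var 0) E) →
      (∀ a, Red σ a → SN (plug (.inl σ τ a) E)) →
      (∀ b, Red τ b → SN (plug (.inr σ τ b) E)) → SN (plug t E)

theorem cr1 : ∀ (ρ : Ty) {t : Tm}, Red ρ t → SN t := by
  intro ρ
  induction ρ with
  | base i => exact fun h => h
  | bot => exact fun h => h [] (sn_var 0)
  | arr σ τ ihσ ihτ => exact fun h => h.1
  | and σ τ ihσ ihτ => exact fun h => h.1
  | or σ τ ihσ ihτ =>
    intro t h
    exact h [] (sn_var 0) (fun a ha => (ihσ ha).inl_cong) (fun b hb => (ihτ hb).inr_cong)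

theorem cr2 : ∀ (ρ : Ty) {t t' : Tm}, Step t t' → Red ρ t → Red ρ t' := by
  intro ρ
  induction ρ with
  | base i => exact fun hs h => h.step hs
  | bot => exact fun hs h E hE => (h E hE).step (plug_step hs E)
  | arr σ τ ihσ ihτ => exact fun hs h => ⟨h.1.step hs, fun a ha => ihτ (.appL hs) (h.2 a ha)⟩
  | and σ τ ihσ ihτ =>
    exact fun hs h => ⟨h.1.step hs, ihσ (.proj1 hs) h.2.1, ihτ (.proj2 hs) h.2.2⟩
  | or σ τ ihσ ihτ =>
    exact fun hs h E h1 h2 h3 => (h E h1 h2 h3).step (plug_step hs E)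

theorem expand : ∀ (ρ : Ty) (x y : Tm),
    (∀ E, SN (plug y E) → SN (plug x E)) → Red ρ y → Red ρ x := by
  intro ρ
  induction ρ with
  | base i => exact fun x y h hy => h [] hy
  | bot => exact fun x y h hy E hE => h E (hy E hE)
  | arr σ τ ihσ ihτ =>
    intro x y h hy
    exact ⟨h [] hy.1, fun a ha =>
      ihτ _ _ (fun E hE => h (.fapp a :: E) hE) (hy.2 a ha)⟩
  | and σ τ ihσ ihτ =>
    intro x y h hy
    exact ⟨h [] hy.1, ihσ _ _ (fun E hE => h (.fp1 σ τ :: E) hE) hy.2.1,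
      ihτ _ _ (fun E hE => h (.fp2 σ τ :: E) hE) hy.2.2⟩
  | or σ τ ihσ ihτ =>
    exact fun x y h hy E h1 h2 h3 => h E (hy E h1 h2 h3)

theorem var_red : ∀ (ρ : Ty) (n : ℕ) (E : List Fr), (∀ F ∈ E, AppFr F) →
    (∀ u, Fr.fapp u ∈ E → SN u) → Red ρ (plug (.var n) E) := by
  intro ρ
  induction ρ with
  | base i =>
    intro n E h1 h2
    have := prepend (E₀ := []) (sn_var 0) E h1 h2 n
    simpa [Red] using this
  | bot =>
    intro n E h1 h2 E₀ hE₀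
    have := prepend hE₀ E h1 h2 n
    rwa [plug_append] at this
  | arr σ τ ihσ ihτ =>
    intro n E h1 h2
    constructor
    · have := prepend (E₀ := []) (sn_var 0) E h1 h2 n
      simpa using this
    · intro a ha
      have := ihτ n (E ++ [.fapp a])
        (by intro F hF; rcases List.mem_append.mp hF with h | h
            · exact h1 F h
            · simp at h; subst h; exact appFr_fapp a)
        (by intro u hu; rcases List.mem_append.mp hu with h | h
            · exact h2 u h
            · simp at h; subst h; exact cr1 σ ha)
      rwa [plug_append] at this
  | and σ τ ihσ ihτ =>
    intro n E h1 h2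
    refine ⟨?_, ?_, ?_⟩
    · have := prepend (E₀ := []) (sn_var 0) E h1 h2 n
      simpa using this
    · have := ihσ n (E ++ [.fp1 σ τ])
        (by intro F hF; rcases List.mem_append.mp hF with h | h
            · exact h1 F h
            · simp at h; subst h; exact appFr_fp1 σ τ)
        (by intro u hu; rcases List.mem_append.mp hu with h | h
            · exact h2 u h
            · simp at h)
      rwa [plug_append] at this
    · have := ihτ n (E ++ [.fp2 σ τ])
        (by intro F hF; rcases List.mem_append.mp hF with h | h
            · exact h1 F h
            · simp at h; subst h; exact appFr_fp2 σ τ)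
        (by intro u hu; rcases List.mem_append.mp hu with h | h
            · exact h2 u h
            · simp at h)
      rwa [plug_append] at this
  | or σ τ ihσ ihτ =>
    intro n E h1 h2 E₀ hE₀ _ _
    have := prepend hE₀ E h1 h2 n
    rwa [plug_append] at this

theorem red_var (ρ : Ty) (n : ℕ) : Red ρ (.var n) :=
  var_red ρ n [] (by simp) (by simp)

/-! ### Good applicative stacks -/

inductive GoodE : Ty → Ty → List Fr → Prop
  | nil {ρ} : GoodE ρ ρ []
  | fapp {σ τ ρ u E} : Red σ u → GoodE τ ρ E → GoodE (.arr σ τ) ρ (.fapp u :: E)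
  | fp1 {σ τ ρ E} : GoodE σ ρ E → GoodE (.and σ τ) ρ (.fp1 σ τ :: E)
  | fp2 {σ τ ρ E} : GoodE τ ρ E → GoodE (.and σ τ) ρ (.fp2 σ τ :: E)

theorem goodE_appFr {π ρ : Ty} {E : List Fr} (h : GoodE π ρ E) : ∀ F ∈ E, AppFr F := by
  induction h with
  | nil => simp
  | fapp hu _ ih =>
    intro F hF
    rcases List.mem_cons.mp hF with rfl | hF
    · exact appFr_fapp _
    · exact ih F hF
  | fp1 _ ih =>
    intro F hF
    rcases List.mem_cons.mp hF with rfl | hF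
    · exact appFr_fp1 _ _
    · exact ih F hF
  | fp2 _ ih =>
    intro F hF
    rcases List.mem_cons.mp hF with rfl | hF
    · exact appFr_fp2 _ _
    · exact ih F hF

theorem goodE_fappSN {π ρ : Ty} {E : List Fr} (h : GoodE π ρ E) :
    ∀ u, Fr.fapp u ∈ E → SN u := by
  induction h with
  | nil => simp
  | @fapp σ τ ρ u E hu _ ih =>
    intro v hv
    rcases List.mem_cons.mp hv with hv | hv
    · injection hv with h0; subst h0; exact cr1 σ hu
    · exact ih v hv
  | fp1 _ ih =>
    intro v hv
    rcases List.mem_cons.mp hv with hv | hv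
    · exact Fr.noConfusion hv
    · exact ih v hv
  | fp2 _ ih =>
    intro v hv
    rcases List.mem_cons.mp hv with hv | hv
    · exact Fr.noConfusion hv
    · exact ih v hv

theorem goodE_snoc_fapp_aux {π μ : Ty} {E : List Fr} (h : GoodE π μ E) :
    ∀ {ρ₁ ρ₂ : Ty} {u : Tm}, μ = .arr ρ₁ ρ₂ → Red ρ₁ u → GoodE π ρ₂ (E ++ [.fapp u]) := by
  induction h with
  | nil => rintro ρ₁ ρ₂ u rfl hu; exact .fapp hu .nil
  | fapp h2 _ ih => rintro ρ₁ ρ₂ u rfl hu; exact .fapp h2 (ih rfl hu)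
  | fp1 _ ih => rintro ρ₁ ρ₂ u rfl hu; exact .fp1 (ih rfl hu)
  | fp2 _ ih => rintro ρ₁ ρ₂ u rfl hu; exact .fp2 (ih rfl hu)

theorem goodE_snoc_fapp {π ρ₁ ρ₂ : Ty} {E : List Fr} {u : Tm}
    (h : GoodE π (.arr ρ₁ ρ₂) E) (hu : Red ρ₁ u) : GoodE π ρ₂ (E ++ [.fapp u]) :=
  goodE_snoc_fapp_aux h rfl hu

theorem goodE_snoc_fp1_aux {π μ : Ty} {E : List Fr} (h : GoodE π μ E) :
    ∀ {ρ₁ ρ₂ : Ty}, μ = .and ρ₁ ρ₂ → GoodE π ρ₁ (E ++ [.fp1 ρ₁ ρ₂]) := by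
  induction h with
  | nil => rintro ρ₁ ρ₂ rfl; exact .fp1 .nil
  | fapp h2 _ ih => rintro ρ₁ ρ₂ rfl; exact .fapp h2 (ih rfl)
  | fp1 _ ih => rintro ρ₁ ρ₂ rfl; exact .fp1 (ih rfl)
  | fp2 _ ih => rintro ρ₁ ρ₂ rfl; exact .fp2 (ih rfl)

theorem goodE_snoc_fp1 {π ρ₁ ρ₂ : Ty} {E : List Fr}
    (h : GoodE π (.and ρ₁ ρ₂) E) : GoodE π ρ₁ (E ++ [.fp1 ρ₁ ρ₂]) :=
  goodE_snoc_fp1_aux h rfl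

theorem goodE_snoc_fp2_aux {π μ : Ty} {E : List Fr} (h : GoodE π μ E) :
    ∀ {ρ₁ ρ₂ : Ty}, μ = .and ρ₁ ρ₂ → GoodE π ρ₂ (E ++ [.fp2 ρ₁ ρ₂]) := by
  induction h with
  | nil => rintro ρ₁ ρ₂ rfl; exact .fp2 .nil
  | fapp h2 _ ih => rintro ρ₁ ρ₂ rfl; exact .fapp h2 (ih rfl)
  | fp1 _ ih => rintro ρ₁ ρ₂ rfl; exact .fp1 (ih rfl)
  | fp2 _ ih => rintro ρ₁ ρ₂ rfl; exact .fp2 (ih rfl)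

theorem goodE_snoc_fp2 {π ρ₁ ρ₂ : Ty} {E : List Fr}
    (h : GoodE π (.and ρ₁ ρ₂) E) : GoodE π ρ₂ (E ++ [.fp2 ρ₁ ρ₂]) :=
  goodE_snoc_fp2_aux h rfl

theorem plugred {π ρ : Ty} {E : List Fr} (h : GoodE π ρ E) :
    ∀ {x : Tm}, Red π x → Red ρ (plug x E) := by
  induction h with
  | nil => exact fun hx => hx
  | fapp hu _ ih => exact fun hx => ih (hx.2 _ hu)
  | fp1 _ ih => exact fun hx => ih hx.2.1
  | fp2 _ ih => exact fun hx => ih hx.2.2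

theorem sn_plug_var_goodE {π ρ : Ty} {E : List Fr} (h : GoodE π ρ E) (n : ℕ) :
    SN (plug (.var n) E) := by
  have := prepend (E₀ := []) (sn_var 0) E (goodE_appFr h) (goodE_fappSN h) n
  simpa using this
/-! ### Reducibility of ε- and case-terms -/

theorem sn_eps_full {π : Ty} {a : Tm} {E' : List Fr} (ha : Red .bot a)
    (h : SN (plug (.var 0) E')) : SN (plug (.eps a π) E') :=
  ha (.feps π :: E') (sn_eps_var' h)

theorem sn_case_full {σ τ π : Ty} {w s t : Tm} {E' : List Fr}
    (hw : Red (.or σ τ) w)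
    (HS : ∀ x, Red σ x → SN (plug (s.subst 0 x) E'))
    (HT : ∀ x, Red τ x → SN (plug (t.subst 0 x) E')) :
    SN (plug (.case w σ τ s t π) E') := by
  refine hw (.fcase σ τ s t π :: E') ?_ ?_ ?_
  · exact sn_case_var' (HS _ (red_var σ 0)) (HT _ (red_var τ 0))
  · intro a hra
    exact sn_case_inl (cr1 σ hra) (HS a hra) (HT _ (red_var τ 0))
  · intro b hrb
    exact sn_case_inr (cr1 τ hrb) (HS _ (red_var σ 0)) (HT b hrb)

theorem eps_red : ∀ (ρ : Ty) {π : Ty} {a : Tm} {E : List Fr},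
    Red .bot a → GoodE π ρ E → Red ρ (plug (.eps a π) E) := by
  intro ρ
  induction ρ with
  | base i =>
    intro π a E ha hg
    exact sn_eps_full ha (sn_plug_var_goodE hg 0)
  | bot =>
    intro π a E ha hg E₀ hE₀
    rw [← plug_append]
    exact sn_eps_full ha (prepend hE₀ E (goodE_appFr hg) (goodE_fappSN hg) 0)
  | arr σ τ ihσ ihτ =>
    intro π a E ha hg
    refine ⟨sn_eps_full ha (sn_plug_var_goodE hg 0), fun u hu => ?_⟩
    have := ihτ ha (goodE_snoc_fapp hg hu)
    rwa [plug_append] at this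
  | and σ τ ihσ ihτ =>
    intro π a E ha hg
    refine ⟨sn_eps_full ha (sn_plug_var_goodE hg 0), ?_, ?_⟩
    · have := ihσ ha (goodE_snoc_fp1 hg)
      rwa [plug_append] at this
    · have := ihτ ha (goodE_snoc_fp2 hg)
      rwa [plug_append] at this
  | or σ τ ihσ ihτ =>
    intro π a E ha hg E₀ h1 _ _
    rw [← plug_append]
    exact sn_eps_full ha (prepend h1 E (goodE_appFr hg) (goodE_fappSN hg) 0)

theorem case_red : ∀ (ρ : Ty) {σ τ π : Ty} {w s t : Tm} {E : List Fr},
    Red (.or σ τ) w →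
    (∀ a, Red σ a → Red π (s.subst 0 a)) →
    (∀ b, Red τ b → Red π (t.subst 0 b)) →
    GoodE π ρ E → Red ρ (plug (.case w σ τ s t π) E) := by
  intro ρ
  induction ρ with
  | base i =>
    intro σ τ π w s t E hw hs ht hg
    exact sn_case_full hw (fun x hx => plugred hg (hs x hx))
      (fun x hx => plugred hg (ht x hx))
  | bot =>
    intro σ τ π w s t E hw hs ht hg E₀ hE₀
    rw [← plug_append]
    refine sn_case_full hw (fun x hx => ?_) (fun x hx => ?_)
    · rw [plug_append]
      exact (plugred hg (hs x hx)) E₀ hE₀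
    · rw [plug_append]
      exact (plugred hg (ht x hx)) E₀ hE₀
  | arr α β ihα ihβ =>
    intro σ τ π w s t E hw hs ht hg
    refine ⟨sn_case_full hw (fun x hx => cr1 _ (plugred hg (hs x hx)))
      (fun x hx => cr1 _ (plugred hg (ht x hx))), fun u hu => ?_⟩
    have := ihβ hw hs ht (goodE_snoc_fapp hg hu)
    rwa [plug_append] at this
  | and α β ihα ihβ =>
    intro σ τ π w s t E hw hs ht hg
    refine ⟨sn_case_full hw (fun x hx => cr1 _ (plugred hg (hs x hx)))
      (fun x hx => cr1 _ (plugred hg (ht x hx))), ?_, ?_⟩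
    · have := ihα hw hs ht (goodE_snoc_fp1 hg)
      rwa [plug_append] at this
    · have := ihβ hw hs ht (goodE_snoc_fp2 hg)
      rwa [plug_append] at this
  | or α β ihα ihβ =>
    intro σ τ π w s t E hw hs ht hg E₀ h1 h2 h3
    rw [← plug_append]
    refine sn_case_full hw (fun x hx => ?_) (fun x hx => ?_)
    · rw [plug_append]
      exact (plugred hg (hs x hx)) E₀ h1 h2 h3
    · rw [plug_append]
      exact (plugred hg (ht x hx)) E₀ h1 h2 h3
/-! ### Parallel substitution -/

def consE (a : Tm) (e : ℕ → Tm) : ℕ → Tm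
  | 0 => a
  | n + 1 => e n

def liftE (e : ℕ → Tm) : ℕ → Tm
  | 0 => .var 0
  | n + 1 => Tm.shift 0 1 (e n)

@[simp] theorem consE_zero (a : Tm) (e : ℕ → Tm) : consE a e 0 = a := rfl
@[simp] theorem consE_succ (a : Tm) (e : ℕ → Tm) (n : ℕ) : consE a e (n + 1) = e n := rfl
@[simp] theorem liftE_zero (e : ℕ → Tm) : liftE e 0 = .var 0 := rfl
@[simp] theorem liftE_succ (e : ℕ → Tm) (n : ℕ) : liftE e (n + 1) = Tm.shift 0 1 (e n) := rfl

def msubst : Tm → (ℕ → Tm) → Tm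
  | .var n, e => e n
  | .lam σ t, e => .lam σ (msubst t (liftE e))
  | .app a b, e => .app (msubst a e) (msubst b e)
  | .pair a b, e => .pair (msubst a e) (msubst b e)
  | .inl σ τ t, e => .inl σ τ (msubst t e)
  | .inr σ τ t, e => .inr σ τ (msubst t e)
  | .proj1 t σ τ, e => .proj1 (msubst t e) σ τ
  | .proj2 t σ τ, e => .proj2 (msubst t e) σ τ
  | .case w σ τ s t δ, e =>
      .case (msubst w e) σ τ (msubst s (liftE e)) (msubst t (liftE e)) δ
  | .eps t σ, e => .eps (msubst t e) σ

def liftEN : ℕ → (ℕ → Tm) → (ℕ → Tm)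
  | 0, e => e
  | k + 1, e => liftE (liftEN k e)

theorem liftEN_lt : ∀ (k : ℕ) (e : ℕ → Tm) (n : ℕ), n < k → liftEN k e n = .var n := by
  intro k
  induction k with
  | zero => omega
  | succ k ih =>
    intro e n hn
    cases n with
    | zero => rfl
    | succ n =>
      simp only [liftEN, liftE_succ, ih _ n (by omega), Tm.shift]
      rw [if_neg (by omega)]

theorem liftEN_ge : ∀ (k : ℕ) (e : ℕ → Tm) (n : ℕ), liftEN k e (n + k) = Tm.shift 0 k (e n) := by
  intro k
  induction k with
  | zero => intro e n; rw [Tm.shift_zero]; rfl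
  | succ k ih =>
    intro e n
    show liftE (liftEN k e) (n + k + 1) = _
    rw [liftE_succ, ih e n, Tm.shift_shift_merge (e n) 0 0 1 k (k + 1)
      (by omega) (by omega) (by omega)]

theorem msubst_subst0 : ∀ (t : Tm) (e : ℕ → Tm) (a : Tm) (k : ℕ),
    (msubst t (liftEN k (liftE e))).subst k (Tm.shift 0 k a) = msubst t (liftEN k (consE a e)) := by
  intro t
  induction t with
  | var n =>
    intro e a k
    rcases lt_trichotomy n k with h | rfl | h
    · show (liftEN k (liftE e) n).subst k _ = liftEN k (consE a e) n
      rw [liftEN_lt _ _ _ h, liftEN_lt _ _ _ h]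
      simp only [Tm.subst]
      rw [if_neg (by omega), if_neg (by omega)]
    · show (liftEN n (liftE e) n).subst n _ = liftEN n (consE a e) n
      have h1 : liftEN n (liftE e) (0 + n) = Tm.shift 0 n (liftE e 0) := liftEN_ge n _ 0
      have h2 : liftEN n (consE a e) (0 + n) = Tm.shift 0 n (consE a e 0) := liftEN_ge n _ 0
      rw [Nat.zero_add] at h1 h2
      rw [h1, h2]
      simp only [liftE_zero, consE_zero, Tm.shift]
      rw [if_neg (by omega)]
      simp only [Tm.subst]
      rw [if_pos (by omega)]
    · obtain ⟨m, rfl⟩ : ∃ m, n = (m + 1) + k := ⟨n - k - 1, by omega⟩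
      show (liftEN k (liftE e) ((m+1)+k)).subst k _ = liftEN k (consE a e) ((m+1)+k)
      rw [liftEN_ge, liftEN_ge]
      simp only [liftE_succ, consE_succ]
      rw [Tm.shift_shift_merge (e m) 0 0 k 1 (1 + k) (by omega) (by omega) (by omega)]
      rw [Tm.subst_shift_cancel (e m) _ 0 (1 + k) k k (by omega) (by omega) (by omega)]
  | lam σ t ih =>
    intro e a k
    show Tm.lam σ ((msubst t (liftEN (k+1) (liftE e))).subst (k+1) (Tm.shift 0 1 (Tm.shift 0 k a)))
      = Tm.lam σ (msubst t (liftEN (k+1) (consE a e)))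
    rw [Tm.shift_shift_merge a 0 0 1 k (k+1) (by omega) (by omega) (by omega)]
    rw [ih e a (k+1)]
  | app s t ihs iht => intro e a k; exact congrArg₂ Tm.app (ihs e a k) (iht e a k)
  | pair s t ihs iht => intro e a k; exact congrArg₂ Tm.pair (ihs e a k) (iht e a k)
  | inl σ τ t ih => intro e a k; exact congrArg (Tm.inl σ τ) (ih e a k)
  | inr σ τ t ih => intro e a k; exact congrArg (Tm.inr σ τ) (ih e a k)
  | proj1 t σ τ ih => intro e a k; exact congrArg (fun x => Tm.proj1 x σ τ) (ih e a k)
  | proj2 t σ τ ih => intro e a k; exact congrArg (fun x => Tm.proj2 x σ τ) (ih e a k)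
  | case w σ τ s t δ ihw ihs iht =>
    intro e a k
    show Tm.case ((msubst w (liftEN k (liftE e))).subst k (Tm.shift 0 k a)) σ τ
        ((msubst s (liftEN (k+1) (liftE e))).subst (k+1) (Tm.shift 0 1 (Tm.shift 0 k a)))
        ((msubst t (liftEN (k+1) (liftE e))).subst (k+1) (Tm.shift 0 1 (Tm.shift 0 k a))) δ
      = _
    rw [Tm.shift_shift_merge a 0 0 1 k (k+1) (by omega) (by omega) (by omega)]
    rw [ihw e a k, ihs e a (k+1), iht e a (k+1)]
    rfl
  | eps t σ ih => intro e a k; exact congrArg (fun x => Tm.eps x σ) (ih e a k)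

theorem msubst_cons0 (t : Tm) (e : ℕ → Tm) (a : Tm) :
    (msubst t (liftE e)).subst 0 a = msubst t (consE a e) := by
  have := msubst_subst0 t e a 0
  rwa [Tm.shift_zero] at this

theorem msubst_ext : ∀ (t : Tm) (e e' : ℕ → Tm), (∀ n, e n = e' n) → msubst t e = msubst t e' := by
  intro t
  have hlift : ∀ (e e' : ℕ → Tm), (∀ n, e n = e' n) → ∀ n, liftE e n = liftE e' n := by
    intro e e' h n
    cases n with
    | zero => rfl
    | succ n => simp [h n]
  induction t <;> intro e e' h <;> simp only [msubst]
  case var n => exact h n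
  case lam σ t ih => rw [ih _ _ (hlift e e' h)]
  case app s t ihs iht => rw [ihs e e' h, iht e e' h]
  case pair s t ihs iht => rw [ihs e e' h, iht e e' h]
  case inl σ τ t ih => rw [ih e e' h]
  case inr σ τ t ih => rw [ih e e' h]
  case proj1 t σ τ ih => rw [ih e e' h]
  case proj2 t σ τ ih => rw [ih e e' h]
  case case w σ τ s t δ ihw ihs iht =>
    rw [ihw e e' h, ihs _ _ (hlift e e' h), iht _ _ (hlift e e' h)]
  case eps t σ ih => rw [ih e e' h]

theorem liftE_var (n : ℕ) : liftE Tm.var n = Tm.var n := by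
  cases n with
  | zero => rfl
  | succ n => simp [Tm.shift]

theorem msubst_id : ∀ t : Tm, msubst t Tm.var = t := by
  intro t
  induction t <;> simp only [msubst]
  case lam σ t ih => rw [msubst_ext t _ _ liftE_var, ih]
  case app s t ihs iht => rw [ihs, iht]
  case pair s t ihs iht => rw [ihs, iht]
  case inl σ τ t ih => rw [ih]
  case inr σ τ t ih => rw [ih]
  case proj1 t σ τ ih => rw [ih]
  case proj2 t σ τ ih => rw [ih]
  case case w σ τ s t δ ihw ihs iht =>
    rw [ihw, msubst_ext s _ _ liftE_var, ihs, msubst_ext t _ _ liftE_var, iht]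
  case eps t σ ih => rw [ih]
/-! ### Fundamental theorem -/

def EnvGood (Γ : List Ty) (e : ℕ → Tm) : Prop :=
  ∀ n ρ, Γ[n]? = some ρ → Red ρ (e n)

theorem envGood_cons {Γ : List Ty} {σ : Ty} {a : Tm} {e : ℕ → Tm}
    (ha : Red σ a) (he : EnvGood Γ e) : EnvGood (σ :: Γ) (consE a e) := by
  intro n ρ h
  cases n with
  | zero =>
    simp only [List.getElem?_cons_zero] at h
    injection h with h
    subst h
    exact ha
  | succ n => exact he n ρ (by simpa using h)

theorem sn_reflect_subst {t : Tm} {n : ℕ} {s : Tm} (h : SN (t.subst n s)) : SN t :=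
  SN.of_sub (f := fun x => x.subst n s) (fun hs => Tm.step_subst hs n s) h

theorem fund {Γ : List Ty} {M : Tm} {τ : Ty} (h : HasTy Γ M τ) :
    ∀ e, EnvGood Γ e → Red τ (msubst M e) := by
  induction h with
  | var hget => intro e he; exact he _ _ hget
  | @lam Γ σ τ t ht ih =>
    intro e he
    refine ⟨?_, ?_⟩
    · have hb : Red τ ((msubst t (liftE e)).subst 0 (.var 0)) := by
        rw [msubst_cons0]
        exact ih _ (envGood_cons (red_var σ 0) he)
      exact SN.lam (sn_reflect_subst (cr1 τ hb))
    · intro a ha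
      refine expand τ _ _ (fun E hE => sn_beta (cr1 σ ha) hE) ?_
      rw [msubst_cons0]
      exact ih _ (envGood_cons ha he)
  | app hs ht ihs iht =>
    intro e he
    exact (ihs e he).2 _ (iht e he)
  | pair hs ht ihs iht =>
    intro e he
    have hS := ihs e he
    have hT := iht e he
    exact ⟨SN.pair (cr1 _ hS) (cr1 _ hT),
      expand _ _ _ (fun E hE => sn_proj1 (cr1 _ hT) hE) hS,
      expand _ _ _ (fun E hE => sn_proj2 (cr1 _ hS) hE) hT⟩
  | inl ht ih =>
    intro e he E h1 h2 h3
    exact h2 _ (ih e he)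
  | inr ht ih =>
    intro e he E h1 h2 h3
    exact h3 _ (ih e he)
  | proj1 ht ih => intro e he; exact (ih e he).2.1
  | proj2 ht ih => intro e he; exact (ih e he).2.2
  | @case Γ σ τ δ w s t hw hs ht ihw ihs iht =>
    intro e he
    exact case_red δ (ihw e he)
      (fun a ha => by rw [msubst_cons0]; exact ihs _ (envGood_cons ha he))
      (fun b hb => by rw [msubst_cons0]; exact iht _ (envGood_cons hb he))
      GoodE.nil
  | eps ht ih =>
    intro e he
    exact eps_red _ (ih e he) GoodE.nil

theorem sn_no_inf : ∀ {t : Tm}, SN t → ∀ f : ℕ → Tm, f 0 = t →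
    (∀ n, Step (f n) (f (n + 1))) → False := by
  intro t h
  induction h with
  | intro t _ ih =>
    rintro f rfl hf
    exact ih (f 1) (hf 0) (fun n => f (n + 1)) rfl (fun n => hf (n + 1))
/-- Strong normalization of λ(→,∧,∨,⊥): no well-typed term admits an infinite
sequence of β- and commutative reductions. -/
theorem lambda_full_strongly_normalizing {Γ : List Ty} {M : Tm} {τ : Ty}
    (h : HasTy Γ M τ) :
    ¬ ∃ f : ℕ → Tm, f 0 = M ∧ ∀ n, Beta (f n) (f (n + 1)) ∨ Comm (f n) (f (n + 1)) := by
  rintro ⟨f, h0, hf⟩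
  have hM : Red τ M := by
    have := fund h Tm.var (fun n ρ _ => red_var ρ n)
    rwa [msubst_id] at this
  exact sn_no_inf (cr1 τ hM) f h0 (fun n => step_iff_beta_or_comm.mpr (hf n))
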